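/- arXiv:1105.1838 — 9 statements merged into one kernel-verified Lean document; each statement's English description precedes it below -/
import Mathlib

section
/- For integers 0 ≤ k ≤ n, the alternative Jacobi polynomial P_{nk}^{(α,β)}(x) is a polynomial in x whose lowest-order term in x is (Γ(α+n+k+2)/((n-k)! Γ(α+2k+2))) x^k; in particular P_{nk}^{(α,β)} is divisible by x^k and the coefficient of x^k is Γ(α+n+k+2)/((n-k)! Γ(α+2k+2)). -/
open Real MeasureTheory

/-- Falling factorial `(a)_m = a (a-1) ⋯ (a-m+1)` for real `a`. -/
noncomputable def ffall (a : ℝ) (m : ℕ) : ℝ := ∏ i ∈ Finset.range m, (a - i)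

/-- Alternative Jacobi polynomials defined by the Rodrigues-type formula. -/
noncomputable def altJacobi (α β : ℝ) (n k : ℕ) (x : ℝ) : ℝ :=
  x ^ (-α - k - 1 : ℝ) * (1 - x) ^ (-β : ℝ) / (n - k).factorial *
    iteratedDeriv (n - k)
      (fun y : ℝ => y ^ (α + n + k + 1 : ℝ) * (1 - y) ^ (β + n - k : ℝ)) x

lemma ffall_succ (a : ℝ) (m : ℕ) : ffall a (m+1) = ffall a m * (a - m) :=
  Finset.prod_range_succ _ _

noncomputable def cf (p q : ℝ) (m j : ℕ) : ℝ :=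
  (m.choose j : ℝ) * ffall p j * (-1)^(m-j) * ffall q (m-j)

lemma cf_zero_of_lt (p q : ℝ) {m j : ℕ} (h : m < j) : cf p q m j = 0 := by
  simp [cf, Nat.choose_eq_zero_of_lt h]

lemma cf_rec0 (p q : ℝ) (m : ℕ) : cf p q (m+1) 0 = - cf p q m 0 * (q - m) := by
  simp only [cf, Nat.choose_zero_right, Nat.cast_one, Nat.sub_zero, ffall_succ, pow_succ]
  ring

lemma cf_rec (p q : ℝ) (m j : ℕ) :
    cf p q (m+1) (j+1) = cf p q m j * (p - j) - cf p q m (j+1) * (q - (m:ℝ) + ((j:ℝ)+1)) := by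
  rcases lt_or_ge j m with h | h
  · have h1 : j + 1 ≤ m := h
    have hs : m - j = (m - (j+1)) + 1 := by omega
    have hmj : ((m - (j+1) : ℕ) : ℝ) = (m:ℝ) - (j:ℝ) - 1 := by
      push_cast [Nat.cast_sub h1]; ring
    simp only [cf, Nat.succ_sub_succ, hs, ffall_succ, pow_succ, Nat.choose_succ_succ,
      Nat.cast_add]
    rw [hmj]; ring
  · rcases eq_or_lt_of_le h with h' | h'
    · subst h'
      simp only [cf, Nat.choose_self, Nat.succ_sub_succ, Nat.sub_self, ffall_succ,
        Nat.choose_succ_self, cf_zero_of_lt]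
      simp [ffall]
    · rw [cf_zero_of_lt p q (by omega), cf_zero_of_lt p q (by omega),
        cf_zero_of_lt p q (by omega)]
      ring

lemma term_deriv (a b : ℝ) {x : ℝ} (hx : x ∈ Set.Ioo (0:ℝ) 1) :
    HasDerivAt (fun y : ℝ => y ^ a * (1-y) ^ b)
      (a * x ^ (a-1) * (1-x) ^ b - b * x ^ a * (1-x) ^ (b-1)) x := by
  obtain ⟨hx0, hx1⟩ := hx
  have h1 : HasDerivAt (fun y : ℝ => y ^ a) (a * x ^ (a-1)) x :=
    Real.hasDerivAt_rpow_const (Or.inl hx0.ne')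
  have h0 : HasDerivAt (fun y : ℝ => 1 - y) (-1) x := by
    simpa using (hasDerivAt_id x).const_sub (1:ℝ)
  have h2 : HasDerivAt (fun y : ℝ => (1-y) ^ b) (-1 * b * (1-x) ^ (b-1)) x :=
    h0.rpow_const (p := b) (Or.inl (by intro h; linarith))
  have := h1.mul h2
  exact this.congr_deriv (by ring)

lemma iter_formula (p q : ℝ) (m : ℕ) :
    ∀ x ∈ Set.Ioo (0:ℝ) 1,
    iteratedDeriv m (fun y : ℝ => y ^ p * (1-y) ^ q) x
      = ∑ j ∈ Finset.range (m+1), cf p q m j * (x ^ (p - j) * (1-x) ^ (q - m + j)) := by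
  induction m with
  | zero => intro x hx; simp [cf, ffall]
  | succ m ih =>
    intro x hx
    rw [iteratedDeriv_succ]
    have heq : deriv (iteratedDeriv m fun y : ℝ => y ^ p * (1-y) ^ q) x
        = deriv (fun y => ∑ j ∈ Finset.range (m+1),
            cf p q m j * (y ^ (p - j) * (1-y) ^ (q - m + j))) x :=
      Filter.EventuallyEq.deriv_eq (Filter.eventuallyEq_of_mem (isOpen_Ioo.mem_nhds hx) ih)
    rw [heq]
    have hder : HasDerivAt (fun y => ∑ j ∈ Finset.range (m+1),
          cf p q m j * (y ^ (p - j) * (1-y) ^ (q - m + j)))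
        (∑ j ∈ Finset.range (m+1), cf p q m j *
          ((p-(j:ℝ)) * x ^ (p-j-1) * (1-x) ^ (q-m+j)
            - (q-(m:ℝ)+j) * x ^ (p-(j:ℝ)) * (1-x) ^ (q-(m:ℝ)+j-1))) x := by
      apply HasDerivAt.fun_sum
      intro j _
      exact (term_deriv (p-(j:ℝ)) (q-(m:ℝ)+j) ⟨hx.1, hx.2⟩).const_mul (cf p q m j)
    rw [hder.deriv]
    set T : ℕ → ℝ := fun j => x ^ (p - j) * (1-x) ^ (q - (m:ℝ) - 1 + j) with hT
    have hTs : ∀ j : ℕ, x ^ (p-(j:ℝ)-1) * (1-x) ^ (q-(m:ℝ)+j) = T (j+1) := by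
      intro j
      simp only [hT]
      rw [show p - ((j:ℕ)+1 : ℕ) = p - (j:ℝ) - 1 by push_cast; ring,
        show q - (m:ℝ) - 1 + ((j:ℕ)+1 : ℕ) = q - (m:ℝ) + j by push_cast; ring]
    have hTj : ∀ j : ℕ, x ^ (p-(j:ℝ)) * (1-x) ^ (q-(m:ℝ)+j-1) = T j := by
      intro j
      simp only [hT]
      rw [show q - (m:ℝ) - 1 + (j:ℝ) = q - (m:ℝ) + j - 1 by ring]
    have hTr : ∀ j : ℕ, x ^ (p - (j:ℝ)) * (1-x) ^ (q - ((m:ℕ)+1:ℕ) + j) = T j := by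
      intro j
      simp only [hT]
      rw [show q - (((m:ℕ)+1:ℕ):ℝ) + (j:ℝ) = q - (m:ℝ) - 1 + j by push_cast; ring]
    have E1 : ∑ j ∈ Finset.range (m+1), cf p q m j *
          ((p-(j:ℝ)) * x ^ (p-j-1) * (1-x) ^ (q-m+j)
            - (q-(m:ℝ)+j) * x ^ (p-(j:ℝ)) * (1-x) ^ (q-(m:ℝ)+j-1))
        = (∑ j ∈ Finset.range (m+1), cf p q m j * (p-(j:ℝ)) * T (j+1))
          - ∑ j ∈ Finset.range (m+1), cf p q m j * (q-(m:ℝ)+j) * T j := by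
      rw [← Finset.sum_sub_distrib]
      refine Finset.sum_congr rfl fun j _ => ?_
      rw [← hTs j, ← hTj j]; ring
    rw [E1]
    conv_rhs => rw [Finset.sum_range_succ']
    have E2 : ∀ j : ℕ, cf p q (m+1) (j+1) * (x ^ (p - ((j:ℕ)+1:ℕ)) * (1-x) ^ (q - ((m:ℕ)+1:ℕ) + ((j:ℕ)+1:ℕ)))
        = cf p q m j * (p-(j:ℝ)) * T (j+1) - cf p q m (j+1) * (q-(m:ℝ)+((j:ℝ)+1)) * T (j+1) := by
      intro j
      rw [cf_rec, hTr (j+1)]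
      push_cast
      ring
    simp only [E2]
    rw [Finset.sum_sub_distrib]
    have E3 : cf p q (m+1) 0 * (x ^ (p - ((0:ℕ):ℝ)) * (1-x) ^ (q - ((m:ℕ)+1:ℕ) + ((0:ℕ):ℝ)))
        = - (cf p q m 0 * (q-(m:ℝ)+0) * T 0) := by
      rw [cf_rec0, hTr 0]
      ring
    rw [E3]
    have E4 : ∑ j ∈ Finset.range (m+1), cf p q m j * (q-(m:ℝ)+j) * T j
        = (∑ j ∈ Finset.range (m+1), cf p q m (j+1) * (q-(m:ℝ)+((j:ℝ)+1)) * T (j+1))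
          + cf p q m 0 * (q-(m:ℝ)+0) * T 0 := by
      have h5 := Finset.sum_range_succ' (fun j => cf p q m j * (q-(m:ℝ)+j) * T j) (m+1)
      have h6 : ∑ j ∈ Finset.range (m+1+1), cf p q m j * (q-(m:ℝ)+j) * T j
          = ∑ j ∈ Finset.range (m+1), cf p q m j * (q-(m:ℝ)+j) * T j := by
        rw [Finset.sum_range_succ, cf_zero_of_lt p q (Nat.lt_succ_self m)]
        simp
      rw [← h6, h5]
      push_cast
      ring_nf
      congr 1
      exact Finset.sum_congr rfl fun j _ => by ring
    rw [E4]
    ring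

lemma gamma_ffall (a : ℝ) : ∀ m : ℕ, 0 < a + 1 - m →
    Real.Gamma (a+1) = ffall a m * Real.Gamma (a+1-m) := by
  intro m
  induction m with
  | zero => intro _; simp [ffall]
  | succ m ih =>
    intro h
    have hm1 : ((m+1 : ℕ) : ℝ) = (m:ℝ) + 1 := by push_cast; ring
    rw [hm1] at h ⊢
    have h' : 0 < a + 1 - m := by linarith
    have hne : a - (m:ℝ) ≠ 0 := by intro h0; rw [sub_eq_zero] at h0; rw [h0] at h; linarith
    rw [ih h', ffall_succ]
    have : Real.Gamma (a+1-(m:ℝ)) = (a - m) * Real.Gamma (a - m) := by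
      rw [show a+1-(m:ℝ) = (a-(m:ℝ))+1 by ring, Real.Gamma_add_one hne]
    rw [this, show a+1-((m:ℝ)+1) = a - (m:ℝ) by ring]
    ring

theorem stmt_1 (n k : ℕ) (hk : k ≤ n) (α β : ℝ) (hα : α > -1) (hβ : β > -1) :
    ∃ Q : Polynomial ℝ,
      (∀ x ∈ Set.Ioo (0 : ℝ) 1, altJacobi α β n k x = Q.eval x) ∧
      (Polynomial.X ^ k ∣ Q) ∧
      Q.coeff k =
        Real.Gamma (α + n + k + 2) / ((n - k).factorial * Real.Gamma (α + 2 * k + 2)) := by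
  set m := n - k with hm
  set p : ℝ := α + n + k + 1 with hp
  set q : ℝ := β + n - k with hq
  refine ⟨∑ j ∈ Finset.range (m+1),
    Polynomial.C (cf p q m j / m.factorial) * (Polynomial.X^(n-j) * (1 - Polynomial.X)^j),
    ?_, ?_, ?_⟩
  · intro x hx
    obtain ⟨hx0, hx1⟩ := hx
    unfold altJacobi
    rw [iter_formula p q m x ⟨hx0, hx1⟩, Finset.mul_sum, Polynomial.eval_finset_sum]
    refine Finset.sum_congr rfl fun j hj => ?_
    have hjm : j ≤ m := Nat.lt_succ_iff.mp (Finset.mem_range.mp hj)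
    have hjn : j ≤ n := le_trans hjm (Nat.sub_le n k)
    have e1 : ((n - j : ℕ) : ℝ) = (-α-(k:ℝ)-1) + (p - j) := by
      push_cast [Nat.cast_sub hjn]; ring
    have e2 : ((j : ℕ) : ℝ) = (-β) + (q - (m:ℝ) + j) := by
      rw [hq, hm]; push_cast [Nat.cast_sub hk]; ring
    simp only [Polynomial.eval_mul, Polynomial.eval_pow, Polynomial.eval_C,
      Polynomial.eval_sub, Polynomial.eval_one, Polynomial.eval_X]
    have f1 : x ^ (-α-(k:ℝ)-1) * x ^ (p - (j:ℝ)) = x ^ ((n-j : ℕ)) := by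
      rw [← Real.rpow_natCast x (n-j), e1, Real.rpow_add hx0]
    have f2 : (1-x) ^ (-β) * (1-x) ^ (q - (m:ℝ) + (j:ℝ)) = (1-x) ^ (j:ℕ) := by
      rw [← Real.rpow_add (by linarith : (0:ℝ) < 1-x), ← e2, Real.rpow_natCast]
    rw [← f1, ← f2]
    have hfac : ((n-k).factorial : ℝ) = (m.factorial : ℝ) := by rw [hm]
    rw [hfac]
    ring
  · apply Finset.dvd_sum
    intro j hj
    have hjm : j ≤ m := Nat.lt_succ_iff.mp (Finset.mem_range.mp hj)
    have hkd : k ≤ n - j := by omega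
    exact Dvd.dvd.mul_left (dvd_mul_of_dvd_left (pow_dvd_pow _ hkd) _) _
  · rw [Polynomial.finset_sum_coeff, Finset.sum_range_succ]
    have hz : ∀ j ∈ Finset.range m,
        (Polynomial.C (cf p q m j / m.factorial) *
          (Polynomial.X^(n-j) * (1 - Polynomial.X)^j)).coeff k = 0 := by
      intro j hj
      have hjm : j < m := Finset.mem_range.mp hj
      have : Polynomial.C (cf p q m j / (m.factorial:ℝ)) * (Polynomial.X^(n-j) * (1 - Polynomial.X)^j)
          = (Polynomial.C (cf p q m j / (m.factorial:ℝ)) * (1 - Polynomial.X)^j) * Polynomial.X^(n-j) := by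
        ring
      rw [this, Polynomial.coeff_mul_X_pow', if_neg (by omega)]
    rw [Finset.sum_eq_zero hz, zero_add]
    have hnm : n - m = k := by omega
    rw [hnm]
    have : Polynomial.C (cf p q m m / (m.factorial:ℝ)) * (Polynomial.X^k * (1 - Polynomial.X)^m)
        = (Polynomial.C (cf p q m m / (m.factorial:ℝ)) * (1 - Polynomial.X)^m) * Polynomial.X^k := by
      ring
    rw [this, Polynomial.coeff_mul_X_pow', if_pos le_rfl, Nat.sub_self,
      Polynomial.coeff_zero_eq_eval_zero]
    simp only [Polynomial.eval_mul, Polynomial.eval_pow, Polynomial.eval_C,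
      Polynomial.eval_sub, Polynomial.eval_one, Polynomial.eval_X, sub_zero, one_pow, mul_one]
    have hcf : cf p q m m = ffall p m := by
      simp [cf, ffall]
    have hgpos : (0:ℝ) < α + 2*k + 2 := by
      have : (0:ℝ) ≤ (k:ℝ) := Nat.cast_nonneg k
      linarith
    have hcond : 0 < p + 1 - (m:ℝ) := by
      rw [hp, hm]
      push_cast [Nat.cast_sub hk]
      linarith
    have hgam := gamma_ffall p m hcond
    have hpe : p + 1 = α + n + k + 2 := by rw [hp]; ring
    have hme : p + 1 - (m:ℝ) = α + 2*k + 2 := by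
      rw [hp, hm]; push_cast [Nat.cast_sub hk]; ring
    rw [hme, hpe] at hgam
    rw [hcf, hgam]
    have hgne : Real.Gamma (α + 2*k + 2) ≠ 0 := (Real.Gamma_pos_of_pos hgpos).ne'
    have hfne : ((m.factorial : ℝ)) ≠ 0 := Nat.cast_ne_zero.mpr m.factorial_ne_zero
    field_simp
end

section
/- For integers 0 ≤ k < l ≤ n and α, β > -1, the integral ∫₀¹ x^α (1-x)^β P_{nk}^{(α,β)}(x) x^l dx equals 0. -/
open Real MeasureTheory
open Set Filter Polynomial Topology


noncomputable def QQ (a b : ℝ) : ℕ → Polynomial ℝ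
  | 0 => 1
  | (j+1) => Polynomial.C (a - j) * (1 - Polynomial.X) * QQ a b j
      - Polynomial.C (b - j) * Polynomial.X * QQ a b j
      + Polynomial.X * (1 - Polynomial.X) * (QQ a b j).derivative

noncomputable def phi (a b : ℝ) (j : ℕ) (x : ℝ) : ℝ :=
  x ^ (a - j) * (1 - x) ^ (b - j) * (QQ a b j).eval x

lemma phi_hasDerivAt (a b : ℝ) (j : ℕ) {x : ℝ} (hx : x ∈ Set.Ioo (0:ℝ) 1) :
    HasDerivAt (phi a b j) (phi a b (j+1) x) x := by
  have hx0 : x ≠ 0 := ne_of_gt hx.1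
  have hx1 : (1:ℝ) - x ≠ 0 := by have := hx.2; intro h; nlinarith
  have h1 : HasDerivAt (fun y : ℝ => y ^ (a - j)) ((a - j) * x ^ (a - j - 1)) x :=
    Real.hasDerivAt_rpow_const (Or.inl hx0)
  have h2 : HasDerivAt (fun y : ℝ => (1 - y) ^ (b - j)) ((b - j) * (1 - x) ^ (b - j - 1) * (-1)) x := by
    have := (Real.hasDerivAt_rpow_const (x := 1 - x) (p := b - j) (Or.inl hx1)).comp x
      ((hasDerivAt_id x).const_sub 1)
    simpa [Function.comp_def] using this
  have h3 : HasDerivAt (fun y : ℝ => (QQ a b j).eval y) ((QQ a b j).derivative.eval x) x :=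
    (QQ a b j).hasDerivAt x
  have h : HasDerivAt (phi a b j) _ x := (h1.mul h2).mul h3
  convert h using 1
  have e1 : x ^ (a - j) = x ^ (a - j - 1) * x := by
    rw [← Real.rpow_add_one hx0]; ring_nf
  have e2 : (1 - x) ^ (b - j) = (1 - x) ^ (b - j - 1) * (1 - x) := by
    rw [← Real.rpow_add_one hx1]; ring_nf
  have e3 : a - (j + 1 : ℕ) = a - j - 1 := by push_cast; ring
  have e4 : b - (j + 1 : ℕ) = b - j - 1 := by push_cast; ring
  simp only [phi, QQ, e3, e4, Polynomial.eval_add, Polynomial.eval_sub, Polynomial.eval_mul,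
    Polynomial.eval_C, Polynomial.eval_X, Polynomial.eval_one, Pi.mul_apply]
  rw [e1, e2]
  ring

lemma iteratedDeriv_eq_phi (a b : ℝ) (j : ℕ) {x : ℝ} (hx : x ∈ Set.Ioo (0:ℝ) 1) :
    iteratedDeriv j (fun y : ℝ => y ^ a * (1 - y) ^ b) x = phi a b j x := by
  induction j generalizing x with
  | zero => simp [phi, QQ]
  | succ j ih =>
    rw [iteratedDeriv_succ]
    have hev : iteratedDeriv j (fun y : ℝ => y ^ a * (1 - y) ^ b) =ᶠ[𝓝 x] phi a b j := by
      filter_upwards [Ioo_mem_nhds hx.1 hx.2] with y hy using ih hy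
    rw [hev.deriv_eq]
    exact (phi_hasDerivAt a b j hx).deriv

lemma iteratedDeriv_hasDerivAt (a b : ℝ) (j : ℕ) {x : ℝ} (hx : x ∈ Set.Ioo (0:ℝ) 1) :
    HasDerivAt (iteratedDeriv j (fun y : ℝ => y ^ a * (1 - y) ^ b))
      (iteratedDeriv (j+1) (fun y : ℝ => y ^ a * (1 - y) ^ b) x) x := by
  have hev : phi a b j =ᶠ[𝓝 x] iteratedDeriv j (fun y : ℝ => y ^ a * (1 - y) ^ b) := by
    filter_upwards [Ioo_mem_nhds hx.1 hx.2] with y hy using (iteratedDeriv_eq_phi a b j hy).symm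
  rw [iteratedDeriv_eq_phi a b (j+1) hx]
  exact (phi_hasDerivAt a b j hx).congr_of_eventuallyEq hev.symm

lemma tendsto_phi_zero (a b : ℝ) (j m : ℕ) (ha : 0 < a - j) :
    Tendsto (fun x : ℝ => x ^ m * phi a b j x) (𝓝[>] (0:ℝ)) (𝓝 0) := by
  have hc : ContinuousAt (fun x : ℝ => x ^ m * phi a b j x) 0 := by
    apply ContinuousAt.mul (continuousAt_pow (0:ℝ) m)
    apply ContinuousAt.mul
    apply ContinuousAt.mul
    · exact Real.continuousAt_rpow_const 0 _ (Or.inr ha.le)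
    · exact ContinuousAt.rpow_const (by fun_prop) (Or.inl (by norm_num))
    · exact (QQ a b j).continuousAt
  have h0 : (fun x : ℝ => x ^ m * phi a b j x) 0 = 0 := by
    simp [phi, Real.zero_rpow (ne_of_gt ha)]
  have := hc.tendsto
  simp only [h0] at this
  exact this.mono_left nhdsWithin_le_nhds

lemma tendsto_phi_one (a b : ℝ) (j m : ℕ) (hb : 0 < b - j) :
    Tendsto (fun x : ℝ => x ^ m * phi a b j x) (𝓝[<] (1:ℝ)) (𝓝 0) := by
  have hc : ContinuousAt (fun x : ℝ => x ^ m * phi a b j x) 1 := by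
    apply ContinuousAt.mul (continuousAt_pow (1:ℝ) m)
    apply ContinuousAt.mul
    apply ContinuousAt.mul
    · exact Real.continuousAt_rpow_const 1 _ (Or.inl one_ne_zero)
    · exact ContinuousAt.rpow_const (by fun_prop) (Or.inr hb.le)
    · exact (QQ a b j).continuousAt
  have h0 : (fun x : ℝ => x ^ m * phi a b j x) 1 = 0 := by
    simp [phi, Real.zero_rpow (ne_of_gt hb)]
  have := hc.tendsto
  simp only [h0] at this
  exact this.mono_left nhdsWithin_le_nhds

lemma tendsto_bd_zero (a b : ℝ) (j m : ℕ) (ha : 0 < a - j) :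
    Tendsto (fun x : ℝ => x ^ m * iteratedDeriv j (fun y : ℝ => y ^ a * (1 - y) ^ b) x)
      (𝓝[>] (0:ℝ)) (𝓝 0) := by
  apply (tendsto_phi_zero a b j m ha).congr'
  filter_upwards [Ioo_mem_nhdsGT (by norm_num : (0:ℝ) < 1)] with y hy
  rw [iteratedDeriv_eq_phi a b j hy]

lemma tendsto_bd_one (a b : ℝ) (j m : ℕ) (hb : 0 < b - j) :
    Tendsto (fun x : ℝ => x ^ m * iteratedDeriv j (fun y : ℝ => y ^ a * (1 - y) ^ b) x)
      (𝓝[<] (1:ℝ)) (𝓝 0) := by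
  apply (tendsto_phi_one a b j m hb).congr'
  filter_upwards [Ioo_mem_nhdsLT (by norm_num : (0:ℝ) < 1)] with y hy
  rw [iteratedDeriv_eq_phi a b j hy]

lemma integrable_aux (a b : ℝ) (N m : ℕ) (ha : 0 < a - N) (hb : -1 < b - N) :
    IntervalIntegrable
      (fun x : ℝ => x ^ m * iteratedDeriv N (fun y : ℝ => y ^ a * (1 - y) ^ b) x)
      volume 0 1 := by
  have hpsi : IntervalIntegrable (fun x : ℝ => x ^ m * phi a b N x) volume 0 1 := by
    have h1 : IntervalIntegrable (fun x : ℝ => ((1:ℝ) - x) ^ (b - N)) volume 0 1 := by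
      have := ((intervalIntegral.intervalIntegrable_rpow' hb (a := (0:ℝ)) (b := 1)).comp_sub_left 1).symm
      simpa using this
    have h2 : ContinuousOn (fun x : ℝ => x ^ m * x ^ (a - N) * (QQ a b N).eval x)
        (Set.uIcc (0:ℝ) 1) := by
      apply ContinuousOn.mul
      apply ContinuousOn.mul
      · exact (continuous_pow m).continuousOn
      · exact fun y _ => (Real.continuousAt_rpow_const y _ (Or.inr ha.le)).continuousWithinAt
      · exact (QQ a b N).continuous.continuousOn
    have := h1.mul_continuousOn h2
    apply this.congr
    intro x _
    simp only [phi]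
    ring
  apply hpsi.congr_ae
  have h1 : ∀ᵐ x : ℝ ∂(volume.restrict (Set.uIoc (0:ℝ) 1)), x ≠ 1 := by
    refine (ae_restrict_of_ae ?_)
    simp [ae_iff, Real.volume_singleton]
  have h2 : ∀ᵐ x : ℝ ∂(volume.restrict (Set.uIoc (0:ℝ) 1)), x ∈ Set.uIoc (0:ℝ) 1 :=
    ae_restrict_mem measurableSet_uIoc
  filter_upwards [h1, h2] with x hx1 hx2
  rw [Set.uIoc_of_le (by norm_num : (0:ℝ) ≤ 1)] at hx2
  have hxm : x ∈ Set.Ioo (0:ℝ) 1 := ⟨hx2.1, lt_of_le_of_ne hx2.2 hx1⟩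
  rw [iteratedDeriv_eq_phi a b N hxm]

lemma ibp (a b : ℝ) (m M : ℕ) (ha : (M:ℝ) + 1 < a) (hb : (M:ℝ) < b) :
    ∫ x in (0:ℝ)..1, x ^ m * iteratedDeriv (M+1) (fun y : ℝ => y ^ a * (1 - y) ^ b) x
      = -(m * ∫ x in (0:ℝ)..1,
          x ^ (m-1) * iteratedDeriv M (fun y : ℝ => y ^ a * (1 - y) ^ b) x) := by
  set F := fun y : ℝ => y ^ a * (1 - y) ^ b with hF
  have haM : 0 < a - M := by linarith
  have haM1 : 0 < a - (M+1 : ℕ) := by push_cast; linarith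
  have hbM : 0 < b - M := by linarith
  have hbM1 : (-1:ℝ) < b - (M+1 : ℕ) := by push_cast; linarith
  have hint1 : IntervalIntegrable
      (fun x : ℝ => (m:ℝ) * (x ^ (m-1) * iteratedDeriv M F x)) volume 0 1 :=
    (integrable_aux a b M (m-1) haM (by linarith)).const_mul _
  have hint2 : IntervalIntegrable
      (fun x : ℝ => x ^ m * iteratedDeriv (M+1) F x) volume 0 1 :=
    integrable_aux a b (M+1) m haM1 hbM1
  have hftc : ∫ x in (0:ℝ)..1,
      ((m:ℝ) * (x ^ (m-1) * iteratedDeriv M F x) + x ^ m * iteratedDeriv (M+1) F x)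
        = 0 - 0 := by
    apply intervalIntegral.integral_eq_sub_of_hasDerivAt_of_tendsto
      (f := fun x : ℝ => x ^ m * iteratedDeriv M F x) (by norm_num)
    · intro x hx
      have h : HasDerivAt (fun x : ℝ => x ^ m * iteratedDeriv M F x) _ x :=
        (hasDerivAt_pow m x).mul (iteratedDeriv_hasDerivAt a b M hx)
      refine h.congr_deriv ?_
      ring
    · exact hint1.add hint2
    · exact tendsto_bd_zero a b M m haM
    · exact tendsto_bd_one a b M m hbM
  rw [intervalIntegral.integral_add hint1 hint2] at hftc
  rw [intervalIntegral.integral_const_mul] at hftc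
  linarith

lemma key (a b : ℝ) : ∀ m N : ℕ, m < N → (N:ℝ) < a → (N:ℝ) - 1 < b →
    ∫ x in (0:ℝ)..1, x ^ m * iteratedDeriv N (fun y : ℝ => y ^ a * (1 - y) ^ b) x = 0 := by
  intro m
  induction m with
  | zero =>
    intro N hmN ha hb
    obtain ⟨M, rfl⟩ : ∃ M, N = M + 1 := ⟨N - 1, (Nat.succ_pred_eq_of_pos (by omega)).symm⟩
    rw [ibp a b 0 M (by push_cast at ha ⊢; linarith) (by push_cast at hb ⊢; linarith)]
    simp
  | succ m ih =>
    intro N hmN ha hb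
    obtain ⟨M, rfl⟩ : ∃ M, N = M + 1 := ⟨N - 1, (Nat.succ_pred_eq_of_pos (by omega)).symm⟩
    rw [ibp a b (m+1) M (by push_cast at ha ⊢; linarith) (by push_cast at hb ⊢; linarith)]
    have : m + 1 - 1 = m := rfl
    rw [this, ih M (by omega) (by push_cast at ha ⊢; linarith) (by push_cast at hb ⊢; linarith)]
    ring

theorem stmt_2 (n k l : ℕ) (hkl : k < l) (hl : l ≤ n) (α β : ℝ) (hα : α > -1) (hβ : β > -1) :
    ∫ x in (0 : ℝ)..1,
      x ^ α * (1 - x) ^ β * altJacobi α β n k x * x ^ l = 0 := by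
  have hkn : k < n := lt_of_lt_of_le hkl hl
  have hkey : ∫ x in (0:ℝ)..1, x ^ (l - k - 1) *
      iteratedDeriv (n - k)
        (fun y : ℝ => y ^ (α + n + k + 1 : ℝ) * (1 - y) ^ (β + n - k : ℝ)) x = 0 := by
    apply key
    · omega
    · rw [Nat.cast_sub hkn.le]; push_cast; linarith [Nat.cast_nonneg (α := ℝ) k]
    · rw [Nat.cast_sub hkn.le]; push_cast; linarith
  have hcongr : ∫ x in (0:ℝ)..1,
      x ^ α * (1 - x) ^ β * altJacobi α β n k x * x ^ l
      = ∫ x in (0:ℝ)..1, (1 / ((n-k).factorial : ℝ)) * (x ^ (l - k - 1) *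
        iteratedDeriv (n - k)
          (fun y : ℝ => y ^ (α + n + k + 1 : ℝ) * (1 - y) ^ (β + n - k : ℝ)) x) := by
    apply intervalIntegral.integral_congr_ae
    have h1 : ∀ᵐ x : ℝ, x ≠ 1 := by simp [ae_iff, Real.volume_singleton]
    filter_upwards [h1] with x hx1 hx2
    rw [Set.uIoc_of_le (by norm_num : (0:ℝ) ≤ 1)] at hx2
    have hx : x ∈ Set.Ioo (0:ℝ) 1 := ⟨hx2.1, lt_of_le_of_ne hx2.2 hx1⟩
    have hx0 : (0:ℝ) < x := hx.1
    have hx1' : (0:ℝ) < 1 - x := by have := hx.2; linarith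
    set D := iteratedDeriv (n - k)
        (fun y : ℝ => y ^ (α + n + k + 1 : ℝ) * (1 - y) ^ (β + n - k : ℝ)) x with hD
    have e1 : x ^ α * x ^ (-α - (k:ℝ) - 1) = x ^ (-(k:ℝ) - 1) := by
      rw [← Real.rpow_add hx0]; ring_nf
    have e2 : (1 - x) ^ β * (1 - x) ^ (-β) = 1 := by
      rw [← Real.rpow_add hx1']; simp
    have e3 : x ^ (-(k:ℝ) - 1) * x ^ l = x ^ (l - k - 1) := by
      rw [← Real.rpow_natCast x l, ← Real.rpow_add hx0, ← Real.rpow_natCast x (l - k - 1)]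
      congr 1
      have : l - k - 1 = l - (k + 1) := by omega
      rw [this, Nat.cast_sub (by omega : k + 1 ≤ l)]
      push_cast; ring
    rw [altJacobi, ← hD]
    calc x ^ α * (1 - x) ^ β * (x ^ (-α - (k:ℝ) - 1) * (1 - x) ^ (-β) / ((n-k).factorial : ℝ) * D) * x ^ l
        = ((x ^ α * x ^ (-α - (k:ℝ) - 1)) * ((1 - x) ^ β * (1 - x) ^ (-β)) * x ^ l) * D / ((n-k).factorial : ℝ) := by
          ring
      _ = ((x ^ (-(k:ℝ) - 1) * x ^ l) * 1) * D / ((n-k).factorial : ℝ) := by rw [e1, e2]; ring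
      _ = (x ^ (l - k - 1) : ℝ) * D / ((n-k).factorial : ℝ) := by rw [e3]; ring
      _ = (1 / ((n-k).factorial : ℝ)) * (x ^ (l - k - 1) * D) := by ring
  rw [hcongr, intervalIntegral.integral_const_mul, hkey, mul_zero]
end

section
/- For integers 0 ≤ k, l ≤ n with k ≠ l and real α, β > -1, the alternative Jacobi polynomials are orthogonal on [0,1] with weight x^α(1-x)^β: ∫₀¹ x^α (1-x)^β P_{nk}^{(α,β)}(x) P_{nl}^{(α,β)}(x) dx = 0. -/
open Real MeasureTheory

open Polynomial in
lemma hasDerivAt_G (c d : ℝ) (q : Polynomial ℝ) {x : ℝ} (hx0 : 0 < x) (hx1 : x < 1) :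
    HasDerivAt (fun y : ℝ => y ^ c * (1 - y) ^ d * q.eval y)
      (x ^ (c - 1) * (1 - x) ^ (d - 1) *
        (((C c * (1 - X) - C d * X) * q + X * (1 - X) * derivative q).eval x)) x := by
  have hx1' : (0:ℝ) < 1 - x := by linarith
  have h1 : HasDerivAt (fun y : ℝ => y ^ c) (c * x ^ (c - 1)) x :=
    Real.hasDerivAt_rpow_const (Or.inl hx0.ne')
  have h2 : HasDerivAt (fun y : ℝ => (1 - y) ^ d) (d * (1 - x) ^ (d - 1) * (-1)) x := by
    have hg : HasDerivAt (fun y : ℝ => (1:ℝ) - y) (-1) x := (hasDerivAt_id x).const_sub 1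
    have hf : HasDerivAt (fun y : ℝ => y ^ d) (d * (1 - x) ^ (d - 1)) (1 - x) :=
      Real.hasDerivAt_rpow_const (Or.inl hx1'.ne')
    exact hf.comp x hg
  have h3 : HasDerivAt (fun y : ℝ => q.eval y) (q.derivative.eval x) x := q.hasDerivAt x
  have h := (h1.mul h2).mul h3
  convert h using 1 <;> try rfl
  have hxc : x ^ c = x * x ^ (c - 1) := by
    rw [show c = 1 + (c - 1) by ring, Real.rpow_add hx0, Real.rpow_one]
    ring_nf
  have hxd : (1 - x) ^ d = (1 - x) * (1 - x) ^ (d - 1) := by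
    rw [show d = 1 + (d - 1) by ring, Real.rpow_add hx1', Real.rpow_one]
    ring_nf
  simp only [Polynomial.eval_add, Polynomial.eval_mul, Polynomial.eval_sub, Polynomial.eval_C,
    Polynomial.eval_X, Polynomial.eval_one, Pi.mul_apply]
  rw [hxc, hxd]
  ring

open Polynomial in
lemma iterDeriv_w (c d : ℝ) (j : ℕ) :
    ∃ q : Polynomial ℝ, q.natDegree ≤ j ∧ ∀ x ∈ Set.Ioo (0:ℝ) 1,
      iteratedDeriv j (fun y : ℝ => y ^ c * (1 - y) ^ d) x
        = x ^ (c - j) * (1 - x) ^ (d - j) * q.eval x := by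
  induction j with
  | zero =>
    exact ⟨1, by simp, fun x hx => by simp⟩
  | succ j ih =>
    obtain ⟨q, hdeg, hq⟩ := ih
    refine ⟨(C (c - j) * (1 - X) - C (d - j) * X) * q + X * (1 - X) * derivative q, ?_, ?_⟩
    · apply le_trans (natDegree_add_le _ _)
      apply max_le
      · apply le_trans (natDegree_mul_le)
        have hA : ((C ((c:ℝ) - j) * (1 - X) - C ((d:ℝ) - j) * X)).natDegree ≤ 1 := by
          compute_degree
        omega
      · rcases eq_or_ne (derivative q) 0 with h | h
        · simp [h]
        · have hq1 : q.natDegree ≠ 0 := by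
            intro h0
            exact h (by rw [q.eq_C_of_natDegree_eq_zero h0]; simp)
          have hlt : (derivative q).natDegree < q.natDegree := natDegree_derivative_lt hq1
          apply le_trans natDegree_mul_le
          have h2 : (X * (1 - X) : ℝ[X]).natDegree ≤ 2 := by
            compute_degree
          omega
    · intro x hx
      rw [iteratedDeriv_succ]
      have hd : deriv (iteratedDeriv j (fun y : ℝ => y ^ c * (1 - y) ^ d)) x
          = deriv (fun y : ℝ => y ^ (c - j) * (1 - y) ^ (d - j) * q.eval y) x := by
        apply Filter.EventuallyEq.deriv_eq
        filter_upwards [isOpen_Ioo.mem_nhds hx] with y hy using hq y hy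
      rw [hd, (hasDerivAt_G (c - j) (d - j) q hx.1 hx.2).deriv,
        show (c - ↑(j+1) : ℝ) = c - j - 1 by push_cast; ring,
        show (d - ↑(j+1) : ℝ) = d - j - 1 by push_cast; ring]

lemma contRpow {c : ℝ} (hc : 0 < c) : Continuous fun x : ℝ => x ^ c :=
  continuous_iff_continuousAt.2 fun x => Real.continuousAt_rpow_const x c (Or.inr hc.le)

lemma intInt (a b : ℝ) (ha : -1 < a) (hb : -1 < b) (g : ℝ → ℝ) (hg : Continuous g) :
    IntervalIntegrable (fun x => x ^ a * (1 - x) ^ b * g x) volume 0 1 := by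
  have h1 : IntervalIntegrable (fun x : ℝ => x ^ a * (1 - x) ^ b * g x) volume 0 (1/2) := by
    have hx : IntervalIntegrable (fun x : ℝ => x ^ a) volume 0 (1/2) := intervalIntegral.intervalIntegrable_rpow' ha
    have hcont : ContinuousOn (fun x : ℝ => (1 - x) ^ b * g x) (Set.uIcc 0 (1/2)) := by
      intro x hxm
      rw [Set.uIcc_of_le (by norm_num)] at hxm
      apply ContinuousAt.continuousWithinAt
      apply ContinuousAt.mul _ hg.continuousAt
      exact ((continuous_const.sub continuous_id).continuousAt).rpow_const
        (Or.inl (by intro h; simp only [Pi.sub_apply, id_eq] at h; nlinarith [hxm.2]))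
    simpa [mul_assoc] using hx.mul_continuousOn hcont
  have h2 : IntervalIntegrable (fun x : ℝ => x ^ a * (1 - x) ^ b * g x) volume (1/2) 1 := by
    have hx : IntervalIntegrable (fun x : ℝ => (1 - x) ^ b) volume (1/2) 1 := by
      have := (intervalIntegral.intervalIntegrable_rpow' hb (a := 0) (b := 1/2)).comp_sub_left 1
      norm_num at this
      exact this.symm
    have hcont : ContinuousOn (fun x : ℝ => x ^ a * g x) (Set.uIcc (1/2) 1) := by
      intro x hxm
      rw [Set.uIcc_of_le (by norm_num)] at hxm
      apply ContinuousAt.continuousWithinAt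
      apply ContinuousAt.mul _ hg.continuousAt
      exact continuousAt_id.rpow_const (Or.inl (by intro h; rw [id_eq] at h; rw [h] at hxm; norm_num at hxm))
    have := hx.mul_continuousOn hcont
    apply this.congr
    · intro x _; ring
  exact h1.trans h2

lemma ae_mem_Ioo : ∀ᵐ x : ℝ, x ∈ Set.uIoc (0:ℝ) 1 → x ∈ Set.Ioo (0:ℝ) 1 := by
  have hne : ∀ᵐ x : ℝ, x ≠ 1 := by
    rw [MeasureTheory.ae_iff]
    have : {x : ℝ | ¬x ≠ 1} = {1} := by ext x; simp
    rw [this]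
    exact measure_singleton 1
  filter_upwards [hne] with x hx hmem
  rw [Set.uIoc_of_le (by norm_num)] at hmem
  exact ⟨hmem.1, lt_of_le_of_ne hmem.2 hx⟩

open Polynomial in
lemma rodrigues_orth : ∀ (m : ℕ) (a b : ℝ), -1 < a → -1 < b → ∀ p : Polynomial ℝ,
    p.natDegree < m →
    ∫ x in (0:ℝ)..1, p.eval x *
      iteratedDeriv m (fun y : ℝ => y ^ (a + m : ℝ) * (1 - y) ^ (b + m : ℝ)) x = 0 := by
  intro m
  induction m with
  | zero => intro a b _ _ p hp; exact absurd hp (Nat.not_lt_zero _)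
  | succ m ih =>
    intro a b ha hb p hp
    obtain ⟨q, hqdeg, hq⟩ := iterDeriv_w (a + ((m+1 : ℕ) : ℝ)) (b + ((m+1 : ℕ) : ℝ)) m
    set F : ℝ → ℝ := fun y : ℝ => y ^ (a + ((m+1 : ℕ) : ℝ)) * (1 - y) ^ (b + ((m+1 : ℕ) : ℝ)) with hF
    set G : ℝ → ℝ := fun x => x ^ (a+1) * (1-x) ^ (b+1) * q.eval x with hG
    have hq' : ∀ x ∈ Set.Ioo (0:ℝ) 1, iteratedDeriv m F x = G x := by
      intro x hx
      rw [hF, hq x hx, hG,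
        show (a + ((m+1 : ℕ) : ℝ)) - m = a + 1 by push_cast; ring,
        show (b + ((m+1 : ℕ) : ℝ)) - m = b + 1 by push_cast; ring]
    set q2 : Polynomial ℝ := (C (a+1) * (1 - X) - C (b+1) * X) * q + X * (1 - X) * derivative q
      with hq2
    set Φ : ℝ → ℝ := fun x => p.eval x * G x with hΦ
    set D : ℝ → ℝ := fun x =>
      p.derivative.eval x * G x + x ^ a * (1-x) ^ b * ((p * q2).eval x) with hD
    have hΦc : Continuous Φ := by
      apply (p.continuous).mul
      exact ((contRpow (by linarith)).mul ((contRpow (by linarith)).comp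
        (continuous_const.sub continuous_id))).mul q.continuous
    have hΦderiv : ∀ x ∈ Set.Ioo (0:ℝ) 1, HasDerivWithinAt Φ (D x) (Set.Ioi x) x := by
      intro x hx
      have h := (p.hasDerivAt x).mul (hasDerivAt_G (a+1) (b+1) q hx.1 hx.2)
      rw [show a+1-1 = a by ring, show b+1-1 = b by ring] at h
      apply HasDerivAt.hasDerivWithinAt
      convert h using 1 <;> try rfl
      rw [hD]
      simp only [Polynomial.eval_mul]
      ring
    have hI1 : IntervalIntegrable (fun x => p.derivative.eval x * G x) volume 0 1 := by
      apply Continuous.intervalIntegrable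
      apply (p.derivative.continuous).mul
      exact ((contRpow (by linarith)).mul ((contRpow (by linarith)).comp
        (continuous_const.sub continuous_id))).mul q.continuous
    have hI2 : IntervalIntegrable (fun x => x ^ a * (1-x) ^ b * ((p * q2).eval x)) volume 0 1 :=
      intInt a b ha hb _ (p * q2).continuous
    have hDint : IntervalIntegrable D volume 0 1 := hI1.add hI2
    have key : ∫ x in (0:ℝ)..1, D x = Φ 1 - Φ 0 :=
      intervalIntegral.integral_eq_sub_of_hasDeriv_right_of_le (by norm_num)
        hΦc.continuousOn hΦderiv hDint
    have hΦ0 : Φ 0 = 0 := by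
      simp [hΦ, hG, Real.zero_rpow (by linarith : a + 1 ≠ 0)]
    have hΦ1 : Φ 1 = 0 := by
      simp [hΦ, hG, Real.zero_rpow (by linarith : b + 1 ≠ 0)]
    have hsplit : ∫ x in (0:ℝ)..1, D x
        = (∫ x in (0:ℝ)..1, p.derivative.eval x * G x)
          + ∫ x in (0:ℝ)..1, x ^ a * (1-x) ^ b * ((p * q2).eval x) :=
      intervalIntegral.integral_add hI1 hI2
    -- first integral is zero
    have hfirst : (∫ x in (0:ℝ)..1, p.derivative.eval x * G x) = 0 := by
      rcases eq_or_ne p.derivative 0 with h0 | h0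
      · simp [h0]
      · have hndeg : p.derivative.natDegree < m := by
          have h1 : p.natDegree ≠ 0 := by
            intro hh
            exact h0 (by rw [p.eq_C_of_natDegree_eq_zero hh]; simp)
          have := natDegree_derivative_lt h1
          omega
        have hFF : (fun y : ℝ => y ^ ((a+1) + (m:ℕ) : ℝ) * (1 - y) ^ ((b+1) + (m:ℕ) : ℝ)) = F := by
          funext y
          rw [hF, show ((a+1) + (m:ℕ) : ℝ) = a + ((m+1 : ℕ) : ℝ) by push_cast; ring,
            show ((b+1) + (m:ℕ) : ℝ) = b + ((m+1 : ℕ) : ℝ) by push_cast; ring]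
        have hih := ih (a+1) (b+1) (by linarith) (by linarith) p.derivative hndeg
        rw [hFF] at hih
        refine Eq.trans ?_ hih
        apply intervalIntegral.integral_congr_ae
        filter_upwards [ae_mem_Ioo] with x hx hmem
        rw [hq' x (hx hmem)]
    -- main rewrite
    have hmain : ∫ x in (0:ℝ)..1, p.eval x * iteratedDeriv (m+1) F x
        = ∫ x in (0:ℝ)..1, x ^ a * (1-x) ^ b * ((p * q2).eval x) := by
      apply intervalIntegral.integral_congr_ae
      filter_upwards [ae_mem_Ioo] with x hx hmem
      have hxIoo := hx hmem
      rw [iteratedDeriv_succ]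
      have hd : deriv (iteratedDeriv m F) x = deriv G x := by
        apply Filter.EventuallyEq.deriv_eq
        filter_upwards [isOpen_Ioo.mem_nhds hxIoo] with y hy using hq' y hy
      rw [hd, hG, (hasDerivAt_G (a+1) (b+1) q hxIoo.1 hxIoo.2).deriv,
        show a+1-1 = a by ring, show b+1-1 = b by ring]
      simp only [Polynomial.eval_mul]
      ring
    rw [hmain]
    have : (∫ x in (0:ℝ)..1, x ^ a * (1-x) ^ b * ((p * q2).eval x))
        = (∫ x in (0:ℝ)..1, D x) - ∫ x in (0:ℝ)..1, p.derivative.eval x * G x := by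
      rw [hsplit]; ring
    rw [this, key, hΦ0, hΦ1, hfirst]
    ring

open Polynomial in
lemma altJacobi_orth_aux (n k l : ℕ) (hk : k ≤ n) (hl : l ≤ n) (hkl : k < l)
    (α β : ℝ) (hα : α > -1) (hβ : β > -1) :
    ∫ x in (0 : ℝ)..1,
      x ^ α * (1 - x) ^ β * altJacobi α β n k x * altJacobi α β n l x = 0 := by
  obtain ⟨ql, hqld, hql⟩ := iterDeriv_w (α + n + l + 1 : ℝ) (β + n - l : ℝ) (n - l)
  set p : Polynomial ℝ := X ^ (l - k - 1) * ql with hp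
  have hpdeg : p.natDegree < n - k := by
    have h1 : p.natDegree ≤ (l - k - 1) + ql.natDegree := by
      apply le_trans natDegree_mul_le
      simp [natDegree_X_pow]
    omega
  -- orthogonality from Rodrigues lemma
  have hα' : (-1 : ℝ) < α + 2*k + 1 := by
    have : (0:ℝ) ≤ (k:ℝ) := Nat.cast_nonneg k
    linarith
  have horth := rodrigues_orth (n - k) (α + 2*k + 1) β hα' hβ p hpdeg
  have hFk : (fun y : ℝ => y ^ ((α + 2*k + 1) + ((n-k : ℕ) : ℝ)) * (1 - y) ^ (β + ((n-k : ℕ) : ℝ)))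
      = (fun y : ℝ => y ^ (α + n + k + 1 : ℝ) * (1 - y) ^ (β + n - k : ℝ)) := by
    funext y
    rw [show ((α + 2*k + 1) + ((n-k : ℕ) : ℝ)) = α + n + k + 1 by rw [Nat.cast_sub hk]; ring,
      show (β + ((n-k : ℕ) : ℝ)) = β + n - k by rw [Nat.cast_sub hk]; ring]
  rw [hFk] at horth
  -- pointwise identity
  have hpt : ∀ x ∈ Set.Ioo (0:ℝ) 1,
      x ^ α * (1 - x) ^ β * altJacobi α β n k x * altJacobi α β n l x
      = (1 / ((n-k).factorial * (n-l).factorial) : ℝ) *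
        (p.eval x * iteratedDeriv (n - k)
          (fun y : ℝ => y ^ (α + n + k + 1 : ℝ) * (1 - y) ^ (β + n - k : ℝ)) x) := by
    intro x hx
    have hx0 := hx.1
    have hx1 : (0:ℝ) < 1 - x := by linarith [hx.2]
    rw [altJacobi, altJacobi, hql x hx]
    rw [show ((α + n + l + 1 : ℝ) - ((n-l : ℕ) : ℝ)) = α + 2*l + 1 by rw [Nat.cast_sub hl]; ring,
      show ((β + n - l : ℝ) - ((n-l : ℕ) : ℝ)) = β by rw [Nat.cast_sub hl]; ring]
    have hevp : p.eval x = x ^ ((l:ℝ) - k - 1) * ql.eval x := by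
      rw [hp]
      simp only [Polynomial.eval_mul, Polynomial.eval_pow, Polynomial.eval_X]
      congr 1
      rw [← Real.rpow_natCast x (l - k - 1)]
      congr 1
      have h1 : ((l - k - 1 : ℕ) : ℝ) = ((l - (k+1) : ℕ) : ℝ) := by congr 1
      rw [h1, Nat.cast_sub (by omega : k + 1 ≤ l)]
      push_cast
      ring
    rw [hevp]
    have key1 : x ^ α * x ^ (-α - (k:ℝ) - 1) * x ^ (-α - (l:ℝ) - 1) * x ^ (α + 2*(l:ℝ) + 1)
        = x ^ ((l:ℝ) - k - 1) := by
      rw [← Real.rpow_add hx0, ← Real.rpow_add hx0, ← Real.rpow_add hx0]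
      congr 1
      ring
    have key2 : (1-x) ^ β * (1-x) ^ (-β) * (1-x) ^ (-β) * (1-x) ^ β = 1 := by
      rw [← Real.rpow_add hx1, ← Real.rpow_add hx1, ← Real.rpow_add hx1,
        show β + -β + -β + β = 0 by ring, Real.rpow_zero]
    calc x ^ α * (1 - x) ^ β *
          (x ^ (-α - (k:ℝ) - 1) * (1 - x) ^ (-β) / (n - k).factorial *
            iteratedDeriv (n - k)
              (fun y : ℝ => y ^ (α + n + k + 1 : ℝ) * (1 - y) ^ (β + n - k : ℝ)) x) *
          (x ^ (-α - (l:ℝ) - 1) * (1 - x) ^ (-β) / (n - l).factorial *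
            (x ^ (α + 2*(l:ℝ) + 1) * (1 - x) ^ β * ql.eval x))
        = (x ^ α * x ^ (-α - (k:ℝ) - 1) * x ^ (-α - (l:ℝ) - 1) * x ^ (α + 2*(l:ℝ) + 1)) *
          ((1-x) ^ β * (1-x) ^ (-β) * (1-x) ^ (-β) * (1-x) ^ β) *
          (iteratedDeriv (n - k)
              (fun y : ℝ => y ^ (α + n + k + 1 : ℝ) * (1 - y) ^ (β + n - k : ℝ)) x *
            ql.eval x) / ((n-k).factorial * (n-l).factorial) := by ring
      _ = _ := by rw [key1, key2]; ring
  have hcongr : (∫ x in (0:ℝ)..1,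
        x ^ α * (1 - x) ^ β * altJacobi α β n k x * altJacobi α β n l x)
      = ∫ x in (0:ℝ)..1, (1 / ((n-k).factorial * (n-l).factorial) : ℝ) *
          (p.eval x * iteratedDeriv (n - k)
            (fun y : ℝ => y ^ (α + n + k + 1 : ℝ) * (1 - y) ^ (β + n - k : ℝ)) x) := by
    apply intervalIntegral.integral_congr_ae
    filter_upwards [ae_mem_Ioo] with x hx hmem
    exact hpt x (hx hmem)
  rw [hcongr, intervalIntegral.integral_const_mul, horth, mul_zero]

theorem stmt_3 (n k l : ℕ) (hk : k ≤ n) (hl : l ≤ n) (hkl : k ≠ l)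
    (α β : ℝ) (hα : α > -1) (hβ : β > -1) :
    ∫ x in (0 : ℝ)..1,
      x ^ α * (1 - x) ^ β * altJacobi α β n k x * altJacobi α β n l x = 0 := by
  rcases lt_or_gt_of_ne hkl with h | h
  · exact altJacobi_orth_aux n k l hk hl h α β hα hβ
  · have := altJacobi_orth_aux n l k hl hk h α β hα hβ
    refine Eq.trans ?_ this
    apply intervalIntegral.integral_congr
    intro x _
    ring
end

section
/- For integers 0 ≤ k < n, the alternative Jacobi polynomials satisfy the differentiation formula: d/dx P_{nk}^{(α,β)}(x) - k x^{-1} P_{nk}^{(α,β)}(x) = -(α+β+n+k+2) P_{n-1,k}^{(α+1,β+1)}(x). -/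
open Real MeasureTheory

open scoped ContDiff

lemma aJ_contDiffOn_f (a b : ℝ) :
    ContDiffOn ℝ ∞ (fun y : ℝ => y ^ a * (1 - y) ^ b) (Set.Ioo (0:ℝ) 1) := by
  intro y hy
  apply ContDiffAt.contDiffWithinAt
  have h1 : ContDiffAt ℝ ∞ (fun y : ℝ => y ^ a) y :=
    Real.contDiffAt_rpow_const_of_ne (ne_of_gt hy.1)
  have h2 : ContDiffAt ℝ ∞ (fun y : ℝ => (1 - y) ^ b) y := by
    have h : ContDiffAt ℝ ∞ (fun t : ℝ => t ^ b) (1 - y) :=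
      Real.contDiffAt_rpow_const_of_ne (ne_of_gt (by linarith [hy.2] : (0:ℝ) < 1 - y))
    exact h.comp y (contDiffAt_const.sub contDiffAt_id)
  exact h1.mul h2

lemma aJ_contDiffOn_iter (a b : ℝ) (m : ℕ) :
    ContDiffOn ℝ ∞ (iteratedDeriv m (fun y : ℝ => y ^ a * (1 - y) ^ b)) (Set.Ioo (0:ℝ) 1) := by
  induction m with
  | zero => simpa [iteratedDeriv_zero] using aJ_contDiffOn_f a b
  | succ m ih =>
    rw [iteratedDeriv_succ]
    exact ih.deriv_of_isOpen isOpen_Ioo le_rfl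

lemma aJ_diffAt (a b : ℝ) (m : ℕ) {x : ℝ} (hx : x ∈ Set.Ioo (0:ℝ) 1) :
    DifferentiableAt ℝ (iteratedDeriv m (fun y : ℝ => y ^ a * (1 - y) ^ b)) x :=
  ((aJ_contDiffOn_iter a b m).differentiableOn (by simp) x hx).differentiableAt
    (isOpen_Ioo.mem_nhds hx)

lemma aJ_hasDerivAt_iter (a b : ℝ) (m : ℕ) {x : ℝ} (hx : x ∈ Set.Ioo (0:ℝ) 1) :
    HasDerivAt (iteratedDeriv m (fun y : ℝ => y ^ a * (1 - y) ^ b))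
      (iteratedDeriv (m+1) (fun y : ℝ => y ^ a * (1 - y) ^ b) x) x := by
  rw [iteratedDeriv_succ]
  exact (aJ_diffAt a b m hx).hasDerivAt

lemma aJ_hasDerivAt_one_sub_rpow (q : ℝ) {x : ℝ} (hx : 1 - x ≠ 0) :
    HasDerivAt (fun y : ℝ => (1 - y) ^ q) (-(q * (1 - x) ^ (q - 1))) x := by
  have h := (Real.hasDerivAt_rpow_const (p := q) (Or.inl hx)).comp x
    ((hasDerivAt_const x (1:ℝ)).sub (hasDerivAt_id x))
  refine h.congr_deriv ?_
  ring

lemma aJ_ode (a b : ℝ) {x : ℝ} (hx : x ∈ Set.Ioo (0:ℝ) 1) :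
    x * (1 - x) * deriv (fun y : ℝ => y ^ a * (1 - y) ^ b) x
      = (a * (1 - x) - b * x) * (x ^ a * (1 - x) ^ b) := by
  have hx0 : x ≠ 0 := ne_of_gt hx.1
  have hx1 : (1:ℝ) - x ≠ 0 := ne_of_gt (by linarith [hx.2])
  have h1 : HasDerivAt (fun y : ℝ => y ^ a) (a * x ^ (a-1)) x :=
    Real.hasDerivAt_rpow_const (Or.inl hx0)
  have h2 := aJ_hasDerivAt_one_sub_rpow b hx1
  have hd : deriv (fun y : ℝ => y ^ a * (1 - y) ^ b) x = _ := (h1.mul h2).deriv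
  rw [hd, Real.rpow_sub_one hx0, Real.rpow_sub_one hx1]
  field_simp
  ring

lemma aJ_key (a b : ℝ) (m : ℕ) :
    ∀ x ∈ Set.Ioo (0:ℝ) 1,
      x * (1 - x) * iteratedDeriv (m+1) (fun y : ℝ => y ^ a * (1 - y) ^ b) x
        = ((a - m) - (a + b - 2*m) * x) * iteratedDeriv m (fun y : ℝ => y ^ a * (1 - y) ^ b) x
          - m * (a + b - m + 1) * iteratedDeriv (m-1) (fun y : ℝ => y ^ a * (1 - y) ^ b) x := by
  induction m with
  | zero =>
    intro x hx
    have h := aJ_ode a b hx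
    simp only [zero_add, iteratedDeriv_one, iteratedDeriv_zero, Nat.cast_zero, Nat.zero_sub]
    linear_combination h
  | succ m ih =>
    intro x hx
    set f := (fun y : ℝ => y ^ a * (1 - y) ^ b) with hfdef
    have hev : (fun t => t * (1 - t) * iteratedDeriv (m+1) f t)
        =ᶠ[nhds x] (fun t => ((a - m) - (a + b - 2*m) * t) * iteratedDeriv m f t
          - m * (a + b - m + 1) * iteratedDeriv (m-1) f t) :=
      Filter.eventuallyEq_of_mem (isOpen_Ioo.mem_nhds hx) (fun t ht => ih t ht)
    have hde := hev.deriv_eq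
    have hL : HasDerivAt (fun t : ℝ => t * (1 - t) * iteratedDeriv (m+1) f t)
        ((1 - 2*x) * iteratedDeriv (m+1) f x + x * (1-x) * iteratedDeriv (m+2) f x) x := by
      have h1 : HasDerivAt (fun t : ℝ => t * (1 - t)) (1 - 2*x) x := by
        have h := (hasDerivAt_id x).mul ((hasDerivAt_const x (1:ℝ)).sub (hasDerivAt_id x))
        refine h.congr_deriv ?_
        simp
        ring
      have h2 := aJ_hasDerivAt_iter a b (m+1) hx
      have h := h1.mul h2
      exact h
    have hR : HasDerivAt (fun t : ℝ => ((a - m) - (a + b - 2*m) * t) * iteratedDeriv m f t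
          - m * (a + b - m + 1) * iteratedDeriv (m-1) f t)
        ((-(a + b - 2*m)) * iteratedDeriv m f x
          + ((a - m) - (a + b - 2*m) * x) * iteratedDeriv (m+1) f x
          - m * (a + b - m + 1) * iteratedDeriv (m-1+1) f x) x := by
      have h1 : HasDerivAt (fun t : ℝ => (a - m) - (a + b - 2*m) * t) (-(a+b-2*m)) x := by
        have h := (hasDerivAt_const x (a - (m:ℝ))).sub
          ((hasDerivAt_id x).const_mul ((a:ℝ)+b-2*m))
        refine h.congr_deriv ?_
        ring
      have h2 := aJ_hasDerivAt_iter a b m hx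
      have h3 := (aJ_hasDerivAt_iter a b (m-1) hx).const_mul ((m:ℝ) * (a + b - m + 1))
      exact (h1.mul h2).sub h3
    have heq := (hL.deriv.symm.trans hde).trans hR.deriv
    have hcast : (m:ℝ) * (a+b-m+1) * iteratedDeriv (m-1+1) f x
        = m * (a+b-m+1) * iteratedDeriv m f x := by
      cases m with
      | zero => simp
      | succ j => norm_num
    simp only [Nat.add_sub_cancel]
    push_cast
    push_cast at heq
    linear_combination heq - hcast

theorem stmt_11 (n k : ℕ) (hk : k < n) (α β : ℝ) (hα : α > -1) (hβ : β > -1)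
    (x : ℝ) (hx : x ∈ Set.Ioo (0 : ℝ) 1) :
    deriv (altJacobi α β n k) x - (k : ℝ) * x⁻¹ * altJacobi α β n k x =
      -(α + β + n + k + 2) * altJacobi (α + 1) (β + 1) (n - 1) k x := by
  obtain ⟨hx0, hx1⟩ := hx
  have hxm : x ∈ Set.Ioo (0:ℝ) 1 := ⟨hx0, hx1⟩
  have hx1' : (0:ℝ) < 1 - x := by linarith
  have hxne : x ≠ 0 := ne_of_gt hx0
  have h1xne : (1:ℝ) - x ≠ 0 := ne_of_gt hx1'
  set f : ℝ → ℝ := fun y : ℝ => y ^ (α + n + k + 1 : ℝ) * (1 - y) ^ (β + n - k : ℝ) with hf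
  -- rewrite the three altJacobi occurrences
  have hrw : altJacobi α β n k = fun y : ℝ =>
      y ^ (-α - k - 1 : ℝ) * (1 - y) ^ (-β : ℝ) / ((n - k).factorial : ℝ)
        * iteratedDeriv (n - k) f y := rfl
  have hf2 : (fun y : ℝ => y ^ ((α+1) + (n-1 : ℕ) + k + 1 : ℝ)
      * (1 - y) ^ ((β+1) + (n-1 : ℕ) - k : ℝ)) = f := by
    funext y
    rw [hf,
      show ((α+1) + ((n-1:ℕ):ℝ) + k + 1 : ℝ) = α + n + k + 1 by
        rw [Nat.cast_sub (by omega : 1 ≤ n)]; push_cast; ring,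
      show ((β+1) + ((n-1:ℕ):ℝ) - k : ℝ) = β + n - k by
        rw [Nat.cast_sub (by omega : 1 ≤ n)]; push_cast; ring]
  have hrw2 : altJacobi (α+1) (β+1) (n-1) k x
      = x ^ (-(α+1) - k - 1 : ℝ) * (1 - x) ^ (-(β+1) : ℝ) / ((n - k - 1).factorial : ℝ)
        * iteratedDeriv (n - k - 1) f x := by
    rw [show altJacobi (α+1) (β+1) (n-1) k x
        = x ^ (-(α+1) - k - 1 : ℝ) * (1 - x) ^ (-(β+1) : ℝ) / ((n-1 - k).factorial : ℝ)
          * iteratedDeriv (n-1 - k)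
            (fun y : ℝ => y ^ ((α+1) + (n-1 : ℕ) + k + 1 : ℝ)
              * (1 - y) ^ ((β+1) + (n-1 : ℕ) - k : ℝ)) x from rfl,
      hf2, show n - 1 - k = n - k - 1 from by omega]
  rw [hrw, hrw2]
  -- derivative of the left-hand function
  have h1 : HasDerivAt (fun y : ℝ => y ^ (-α - k - 1 : ℝ))
      ((-α - k - 1) * x ^ (-α - k - 1 - 1 : ℝ)) x :=
    Real.hasDerivAt_rpow_const (Or.inl hxne)
  have h2 : HasDerivAt (fun y : ℝ => (1 - y) ^ (-β : ℝ))
      (-((-β) * (1 - x) ^ (-β - 1 : ℝ))) x := aJ_hasDerivAt_one_sub_rpow (-β) h1xne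
  have h3 : HasDerivAt (iteratedDeriv (n - k) f) (iteratedDeriv (n - k + 1) f x) x :=
    aJ_hasDerivAt_iter _ _ (n - k) hxm
  have HG : HasDerivAt (fun y : ℝ => y ^ (-α - k - 1 : ℝ) * (1 - y) ^ (-β : ℝ) / ((n - k).factorial : ℝ) * iteratedDeriv (n - k) f y) _ x := (((h1.mul h2).div_const ((n - k).factorial : ℝ)).mul h3)
  rw [HG.deriv, Pi.mul_apply]
  -- key identity
  have hg1 : iteratedDeriv (n - k + 1) f x
      = ((((α + n + k + 1) - ((n-k:ℕ):ℝ))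
            - ((α + n + k + 1) + (β + n - k) - 2*((n-k:ℕ):ℝ)) * x)
              * iteratedDeriv (n - k) f x
          - ((n-k:ℕ):ℝ) * ((α + n + k + 1) + (β + n - k) - ((n-k:ℕ):ℝ) + 1)
              * iteratedDeriv (n - k - 1) f x) / (x * (1 - x)) := by
    rw [eq_div_iff (mul_ne_zero hxne h1xne)]
    linear_combination aJ_key (α + n + k + 1) (β + n - k) (n - k) x hxm
  rw [hg1]
  -- rpow normalizations
  rw [Real.rpow_sub_one hxne (-α - k - 1),
    show (-β - 1 : ℝ) = -β - 1 from rfl,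
    Real.rpow_sub_one h1xne (-β),
    show (-(α+1) - (k:ℝ) - 1) = (-α - k - 1) - 1 by ring,
    Real.rpow_sub_one hxne (-α - (k:ℝ) - 1),
    show (-(β+1) : ℝ) = -β - 1 by ring,
    Real.rpow_sub_one h1xne (-β)]
  -- factorial and cast normalizations
  have hfac : ((n - k).factorial : ℝ) = ((n-k:ℕ):ℝ) * ((n - k - 1).factorial : ℝ) := by
    rw [show (n - k).factorial = (n - k) * (n - k - 1).factorial from by
      conv_lhs => rw [show n - k = (n - k - 1) + 1 from by omega]
      rw [Nat.factorial_succ]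
      congr 1
      omega]
    push_cast
    ring
  rw [hfac, Nat.cast_sub hk.le]
  have hc' : ((n - k - 1).factorial : ℝ) ≠ 0 :=
    Nat.cast_ne_zero.mpr (Nat.factorial_ne_zero _)
  have hnk0 : (n:ℝ) - k ≠ 0 := by
    have : (k:ℝ) < n := by exact_mod_cast hk
    linarith
  field_simp
  ring
end

section
/- For integers 0 ≤ k ≤ n, y(x) = P_{nk}^{(α,β)}(x) solves the second-order differential equation x²(1-x) y'' + x[α+2-(α+β+3)x] y' - [k(α+k+1) - n(α+β+n+2)x] y = 0 on (0,1). -/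
open Real MeasureTheory Set

noncomputable def Wfun (p q : ℝ) : ℝ → ℝ := fun y => y ^ p * (1 - y) ^ q

lemma iterWithin_eq (f : ℝ → ℝ) (s : Set ℝ) (hs : IsOpen s) {x : ℝ} (hx : x ∈ s) (j : ℕ) :
    iteratedDerivWithin j f s x = iteratedDeriv j f x := by
  rw [iteratedDerivWithin_eq_iteratedFDerivWithin, iteratedDeriv_eq_iteratedFDeriv,
    iteratedFDerivWithin_of_isOpen j hs hx]

lemma W_contDiffOn (p q : ℝ) : ContDiffOn ℝ ⊤ (Wfun p q) (Ioo (0:ℝ) 1) := by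
  intro x hx
  have h1 : ContDiffAt ℝ ⊤ (fun y : ℝ => y ^ p) x :=
    Real.contDiffAt_rpow_const_of_ne (ne_of_gt hx.1)
  have h2 : ContDiffAt ℝ ⊤ (fun y : ℝ => (1 - y) ^ q) x := by
    have hc : ContDiffAt ℝ ⊤ (fun y : ℝ => (1:ℝ) - y) x := by fun_prop
    exact (Real.contDiffAt_rpow_const_of_ne
      (by intro h; nlinarith [hx.2, hx.1] : (1:ℝ) - x ≠ 0)).comp x hc
  exact (h1.mul h2).contDiffWithinAt

lemma iter_diffAt (p q : ℝ) (j : ℕ) {x : ℝ} (hx : x ∈ Ioo (0:ℝ) 1) :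
    DifferentiableAt ℝ (iteratedDeriv j (Wfun p q)) x := by
  have hs : IsOpen (Ioo (0:ℝ) 1) := isOpen_Ioo
  have h := (W_contDiffOn p q).differentiableOn_iteratedDerivWithin
    (m := j) (by exact_mod_cast WithTop.coe_lt_top _) hs.uniqueDiffOn
  have h2 : DifferentiableAt ℝ (iteratedDerivWithin j (Wfun p q) (Ioo 0 1)) x :=
    (h x hx).differentiableAt (hs.mem_nhds hx)
  apply h2.congr_of_eventuallyEq
  filter_upwards [hs.mem_nhds hx] with y hy
  exact (iterWithin_eq _ _ hs hy j).symm

lemma iter_hasDerivAt (p q : ℝ) (j : ℕ) {x : ℝ} (hx : x ∈ Ioo (0:ℝ) 1) :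
    HasDerivAt (iteratedDeriv j (Wfun p q)) (iteratedDeriv (j+1) (Wfun p q) x) x := by
  have h := (iter_diffAt p q j hx).hasDerivAt
  rwa [← iteratedDeriv_succ] at h

lemma W_hasDerivAt (p q : ℝ) {x : ℝ} (hx : x ∈ Ioo (0:ℝ) 1) :
    HasDerivAt (Wfun p q)
      (p * x ^ (p-1) * (1-x) ^ q - q * x ^ p * (1-x) ^ (q-1)) x := by
  have h1 : HasDerivAt (fun y : ℝ => y ^ p) (p * x ^ (p-1)) x :=
    Real.hasDerivAt_rpow_const (Or.inl (ne_of_gt hx.1))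
  have hc : HasDerivAt (fun y : ℝ => (1:ℝ) - y) (-1) x := by
    simpa using (hasDerivAt_id' x).const_sub (1:ℝ)
  have h2 := hc.rpow_const (p := q)
    (Or.inl (by show (1:ℝ) - x ≠ 0; intro h; nlinarith [hx.2, hx.1]))
  have h := h1.mul h2
  convert h using 1
  all_goals first | rfl | ring

lemma first_order (p q : ℝ) {x : ℝ} (hx : x ∈ Ioo (0:ℝ) 1) :
    x * (1-x) * iteratedDeriv 1 (Wfun p q) x = (p - (p+q)*x) * Wfun p q x := by
  rw [iteratedDeriv_one, (W_hasDerivAt p q hx).deriv]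
  have hx0 : (0:ℝ) < x := hx.1
  have hx1 : (0:ℝ) < 1 - x := by nlinarith [hx.2]
  rw [Real.rpow_sub hx0, Real.rpow_sub hx1, Real.rpow_one, Real.rpow_one]
  show x * (1-x) * (p * (x^p / x) * (1-x)^q - q * x^p * ((1-x)^q / (1-x)))
      = (p - (p+q)*x) * (x^p * (1-x)^q)
  field_simp
  ring

lemma deriv_eq_on {F G : ℝ → ℝ} (h : ∀ y ∈ Ioo (0:ℝ) 1, F y = G y) {x : ℝ}
    (hx : x ∈ Ioo (0:ℝ) 1) : deriv F x = deriv G x := by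
  apply Filter.EventuallyEq.deriv_eq
  filter_upwards [isOpen_Ioo.mem_nhds hx] with y hy using h y hy

lemma Ej (p q : ℝ) : ∀ j : ℕ, ∀ x ∈ Ioo (0:ℝ) 1,
    x*(1-x) * iteratedDeriv (j+2) (Wfun p q) x
      + ((j:ℝ)+1)*(1-2*x) * iteratedDeriv (j+1) (Wfun p q) x
      - (j:ℝ)*((j:ℝ)+1) * iteratedDeriv j (Wfun p q) x
    = (p - (p+q)*x) * iteratedDeriv (j+1) (Wfun p q) x
      - ((j:ℝ)+1)*(p+q) * iteratedDeriv j (Wfun p q) x := by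
  intro j
  induction j with
  | zero =>
    intro x hx
    have hd := deriv_eq_on (F := fun y => y * (1-y) * iteratedDeriv 1 (Wfun p q) y)
      (G := fun y => (p - (p+q)*y) * Wfun p q y)
      (fun y hy => first_order p q hy) hx
    have h0W : HasDerivAt (Wfun p q) (iteratedDeriv 1 (Wfun p q) x) x := by
      have := iter_hasDerivAt p q 0 hx
      rwa [iteratedDeriv_zero] at this
    have hF := ((hasDerivAt_id' x).mul ((hasDerivAt_const x (1:ℝ)).sub (hasDerivAt_id' x))).mul
      (iter_hasDerivAt p q 1 hx)
    have hG := ((hasDerivAt_const x p).sub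
      ((hasDerivAt_const x (p+q)).mul (hasDerivAt_id' x))).mul h0W
    simp only [Pi.mul_def, Pi.sub_def, Pi.add_def] at hF hG
    rw [hF.deriv, hG.deriv] at hd
    have h0 : iteratedDeriv 0 (Wfun p q) x = Wfun p q x := by rw [iteratedDeriv_zero]
    push_cast
    rw [h0]
    linear_combination hd
  | succ j ih =>
    intro x hx
    have hd := deriv_eq_on
      (F := fun y => y*(1-y) * iteratedDeriv (j+2) (Wfun p q) y
        + ((j:ℝ)+1)*(1-2*y) * iteratedDeriv (j+1) (Wfun p q) y
        - (j:ℝ)*((j:ℝ)+1) * iteratedDeriv j (Wfun p q) y)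
      (G := fun y => (p - (p+q)*y) * iteratedDeriv (j+1) (Wfun p q) y
        - ((j:ℝ)+1)*(p+q) * iteratedDeriv j (Wfun p q) y) ih hx
    have h2 := ((hasDerivAt_id' x).mul ((hasDerivAt_const x (1:ℝ)).sub (hasDerivAt_id' x))).mul
      (iter_hasDerivAt p q (j+2) hx)
    have h1 := ((hasDerivAt_const x ((j:ℝ)+1)).mul ((hasDerivAt_const x (1:ℝ)).sub
      ((hasDerivAt_const x (2:ℝ)).mul (hasDerivAt_id' x)))).mul (iter_hasDerivAt p q (j+1) hx)
    have h0 := HasDerivAt.const_mul ((j:ℝ)*((j:ℝ)+1)) (iter_hasDerivAt p q j hx)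
    have hF := (h2.add h1).sub h0
    have g1 := ((hasDerivAt_const x p).sub
      ((hasDerivAt_const x (p+q)).mul (hasDerivAt_id' x))).mul (iter_hasDerivAt p q (j+1) hx)
    have g0 := HasDerivAt.const_mul (((j:ℝ)+1)*(p+q)) (iter_hasDerivAt p q j hx)
    have hG := g1.sub g0
    simp only [Pi.mul_def, Pi.sub_def, Pi.add_def] at hF hG
    rw [hF.deriv, hG.deriv] at hd
    simp only [show j+1+1 = j+2 from rfl, show j+2+1 = j+3 from rfl,
      show j+1+2 = j+3 from rfl] at hd ⊢
    push_cast
    linear_combination hd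

lemma ode_aux (n k : ℕ) (hk : k ≤ n) (α β : ℝ) (p q a b : ℝ)
    (hp : p = α + n + k + 1) (hq : q = β + n - k)
    (ha : a = -α - k - 1) (hb : b = -β)
    (x : ℝ) (hx : x ∈ Ioo (0 : ℝ) 1) :
    x ^ 2 * (1 - x) * iteratedDeriv 2
        (fun y => Wfun a b y / ((n-k).factorial : ℝ) * iteratedDeriv (n-k) (Wfun p q) y) x +
      x * (α + 2 - (α + β + 3) * x) * deriv
        (fun y => Wfun a b y / ((n-k).factorial : ℝ) * iteratedDeriv (n-k) (Wfun p q) y) x -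
      ((k : ℝ) * (α + k + 1) - n * (α + β + n + 2) * x) *
        (Wfun a b x / ((n-k).factorial : ℝ) * iteratedDeriv (n-k) (Wfun p q) x) = 0 := by
  have hx0 : (0:ℝ) < x := hx.1
  have hx1 : (0:ℝ) < 1 - x := by nlinarith [hx.2]
  have hxne : x ≠ 0 := ne_of_gt hx0
  have hx1ne : (1:ℝ) - x ≠ 0 := ne_of_gt hx1
  have hcne : ((n-k).factorial : ℝ) ≠ 0 := by exact_mod_cast (Nat.factorial_pos _).ne'
  -- first derivative
  have hd1 : ∀ y ∈ Ioo (0:ℝ) 1,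
      HasDerivAt (fun y => Wfun a b y / ((n-k).factorial : ℝ)
          * iteratedDeriv (n-k) (Wfun p q) y)
        ((a * y ^ (a-1) * (1-y) ^ b - b * y ^ a * (1-y) ^ (b-1)) / ((n-k).factorial : ℝ)
            * iteratedDeriv (n-k) (Wfun p q) y
          + Wfun a b y / ((n-k).factorial : ℝ) * iteratedDeriv (n-k+1) (Wfun p q) y) y :=
    fun y hy => ((W_hasDerivAt a b hy).div_const _).mul (iter_hasDerivAt p q (n-k) hy)
  have hder : ∀ y ∈ Ioo (0:ℝ) 1,
      deriv (fun y => Wfun a b y / ((n-k).factorial : ℝ)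
          * iteratedDeriv (n-k) (Wfun p q) y) y
        = (a * Wfun (a-1) b y - b * Wfun a (b-1) y) / ((n-k).factorial : ℝ)
            * iteratedDeriv (n-k) (Wfun p q) y
          + Wfun a b y / ((n-k).factorial : ℝ) * iteratedDeriv (n-k+1) (Wfun p q) y := by
    intro y hy
    rw [(hd1 y hy).deriv]
    simp only [Wfun]
    ring
  -- second derivative
  have hE1 : HasDerivAt
      (fun y => (a * Wfun (a-1) b y - b * Wfun a (b-1) y) / ((n-k).factorial : ℝ)
            * iteratedDeriv (n-k) (Wfun p q) y
          + Wfun a b y / ((n-k).factorial : ℝ) * iteratedDeriv (n-k+1) (Wfun p q) y)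
      ((a * ((a-1) * x ^ (a-1-1) * (1-x) ^ b - b * x ^ (a-1) * (1-x) ^ (b-1))
          - b * (a * x ^ (a-1) * (1-x) ^ (b-1) - (b-1) * x ^ a * (1-x) ^ (b-1-1)))
            / ((n-k).factorial : ℝ) * iteratedDeriv (n-k) (Wfun p q) x
        + (a * Wfun (a-1) b x - b * Wfun a (b-1) x) / ((n-k).factorial : ℝ)
            * iteratedDeriv (n-k+1) (Wfun p q) x
        + ((a * x ^ (a-1) * (1-x) ^ b - b * x ^ a * (1-x) ^ (b-1)) / ((n-k).factorial : ℝ)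
              * iteratedDeriv (n-k+1) (Wfun p q) x
            + Wfun a b x / ((n-k).factorial : ℝ) * iteratedDeriv (n-k+2) (Wfun p q) x)) x :=
    (((((W_hasDerivAt (a-1) b hx).const_mul a).sub
        ((W_hasDerivAt a (b-1) hx).const_mul b)).div_const _).mul
        (iter_hasDerivAt p q (n-k) hx)).add
      (((W_hasDerivAt a b hx).div_const _).mul (iter_hasDerivAt p q (n-k+1) hx))
  have h2 : iteratedDeriv 2 (fun y => Wfun a b y / ((n-k).factorial : ℝ)
        * iteratedDeriv (n-k) (Wfun p q) y) x
      = deriv (deriv (fun y => Wfun a b y / ((n-k).factorial : ℝ)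
        * iteratedDeriv (n-k) (Wfun p q) y)) x := by
    rw [show (2:ℕ) = 0+1+1 from rfl, iteratedDeriv_succ, iteratedDeriv_succ,
      iteratedDeriv_zero]
  have hdd := (h2.trans (deriv_eq_on hder hx)).trans hE1.deriv
  -- key ODE for u
  have hE := Ej p q (n-k) x hx
  rw [Nat.cast_sub hk] at hE
  have hu2 : iteratedDeriv (n-k+2) (Wfun p q) x
      = ((p - (p+q)*x - (((n:ℝ)-k)+1)*(1-2*x)) * iteratedDeriv (n-k+1) (Wfun p q) x
        + (((n:ℝ)-k)*(((n:ℝ)-k)+1) - (((n:ℝ)-k)+1)*(p+q))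
            * iteratedDeriv (n-k) (Wfun p q) x) / (x*(1-x)) := by
    rw [eq_div_iff (mul_ne_zero hxne hx1ne)]
    linear_combination hE
  rw [hdd, hder x hx, hu2]
  subst hp hq ha hb
  have hxk : x ^ ((k:ℝ)) ≠ 0 := (Real.rpow_pos_of_pos hx0 _).ne'
  have hxa : x ^ (-α) ≠ 0 := (Real.rpow_pos_of_pos hx0 _).ne'
  have hxb : (1-x) ^ (-β) ≠ 0 := (Real.rpow_pos_of_pos hx1 _).ne'
  simp only [Wfun, Real.rpow_sub hx0, Real.rpow_sub hx1, Real.rpow_one]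
  field_simp
  ring

theorem stmt_12' (n k : ℕ) (hk : k ≤ n) (α β : ℝ) (hα : α > -1) (hβ : β > -1)
    (x : ℝ) (hx : x ∈ Set.Ioo (0 : ℝ) 1) :
    x ^ 2 * (1 - x) * iteratedDeriv 2
        (fun y => Wfun (-α - k - 1) (-β) y / ((n-k).factorial : ℝ)
          * iteratedDeriv (n-k) (Wfun (α + n + k + 1) (β + n - k)) y) x +
      x * (α + 2 - (α + β + 3) * x) * deriv
        (fun y => Wfun (-α - k - 1) (-β) y / ((n-k).factorial : ℝ)
          * iteratedDeriv (n-k) (Wfun (α + n + k + 1) (β + n - k)) y) x -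
      ((k : ℝ) * (α + k + 1) - n * (α + β + n + 2) * x) *
        (Wfun (-α - k - 1) (-β) x / ((n-k).factorial : ℝ)
          * iteratedDeriv (n-k) (Wfun (α + n + k + 1) (β + n - k)) x) = 0 :=
  ode_aux n k hk α β _ _ _ _ rfl rfl rfl rfl x hx

theorem stmt_12 (n k : ℕ) (hk : k ≤ n) (α β : ℝ) (hα : α > -1) (hβ : β > -1)
    (x : ℝ) (hx : x ∈ Set.Ioo (0 : ℝ) 1) :
    x ^ 2 * (1 - x) * iteratedDeriv 2 (altJacobi α β n k) x +
      x * (α + 2 - (α + β + 3) * x) * deriv (altJacobi α β n k) x -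
      ((k : ℝ) * (α + k + 1) - n * (α + β + n + 2) * x) * altJacobi α β n k x = 0 := by
  have hfun : altJacobi α β n k
      = fun y => Wfun (-α - k - 1) (-β) y / ((n-k).factorial : ℝ)
          * iteratedDeriv (n-k) (Wfun (α + n + k + 1) (β + n - k)) y := by
    funext y
    rfl
  rw [hfun]
  exact stmt_12' n k hk α β hα hβ x hx
end

section
/- For integers 0 ≤ k ≤ n and 1 ≤ l ≤ n with k ≠ l, the A-kind polynomials satisfy ∫₀¹ (1/x) A_{nk}(x) A_{nl}(x) dx = 0, and for 1 ≤ k = l ≤ n the integral equals 1/(2k). -/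
open Real MeasureTheory

section AKindAux

open Finset Polynomial

private lemma prod_cast_factorial' (c m : ℕ) :
    ∏ r ∈ Finset.range m, ((c : ℝ) + 1 + r) = (c + m).factorial / c.factorial := by
  induction m with
  | zero =>
      simp only [Finset.range_zero, Finset.prod_empty, Nat.add_zero]
      rw [div_self (Nat.cast_ne_zero.mpr c.factorial_ne_zero)]
  | succ m ih =>
      rw [Finset.prod_range_succ, ih, ← Nat.add_assoc, Nat.factorial_succ]
      have h1 : (c.factorial : ℝ) ≠ 0 := Nat.cast_ne_zero.mpr c.factorial_ne_zero
      push_cast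
      field_simp
      ring

private lemma alt_pascal' (N : ℕ) (f : ℕ → ℝ) :
    ∑ i ∈ range (N+2), (-1:ℝ)^i * ((N+1).choose i) * f i
      = ∑ i ∈ range (N+1), (-1:ℝ)^i * (N.choose i) * (f i - f (i+1)) := by
  rw [Finset.sum_range_succ' (fun i => (-1:ℝ)^i * ((N+1).choose i) * f i) (N+1)]
  have h1 : ∀ i, ((N+1).choose (i+1) : ℝ) = (N.choose i : ℝ) + (N.choose (i+1) : ℝ) := by
    intro i; rw [Nat.choose_succ_succ]; push_cast; ring
  simp only [h1]
  have expand : ∑ i ∈ range (N+1), (-1:ℝ)^(i+1) * ((N.choose i : ℝ) + (N.choose (i+1) : ℝ)) * f (i+1)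
      = (∑ i ∈ range (N+1), -((-1:ℝ)^i * (N.choose i) * f (i+1)))
        + (∑ i ∈ range (N+1), -((-1:ℝ)^i * (N.choose (i+1)) * f (i+1))) := by
    rw [← Finset.sum_add_distrib]; apply Finset.sum_congr rfl; intro i _; ring
  rw [expand]
  have h2 : ∑ i ∈ range (N+1), -((-1:ℝ)^i * (N.choose (i+1)) * f (i+1))
      = ∑ i ∈ range N, -((-1:ℝ)^i * (N.choose (i+1)) * f (i+1)) := by
    rw [Finset.sum_range_succ, Nat.choose_succ_self]; simp
  have h3 : ∑ i ∈ range (N+1), (-1:ℝ)^i * (N.choose i) * f i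
      = (∑ i ∈ range N, (-1:ℝ)^(i+1) * (N.choose (i+1)) * f (i+1)) + (-1:ℝ)^0 * (N.choose 0) * f 0 := by
    rw [Finset.sum_range_succ' (fun i => (-1:ℝ)^i * (N.choose i) * f i) N]
  rw [h2]
  have rhs : ∑ i ∈ range (N+1), (-1:ℝ)^i * (N.choose i) * (f i - f (i+1))
      = (∑ i ∈ range (N+1), (-1:ℝ)^i * (N.choose i) * f i)
        + ∑ i ∈ range (N+1), -((-1:ℝ)^i * (N.choose i) * f (i+1)) := by
    rw [← Finset.sum_add_distrib]; apply Finset.sum_congr rfl; intro i _; ring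
  rw [rhs, h3]
  have h4 : ∑ i ∈ range N, (-1:ℝ)^(i+1) * (N.choose (i+1)) * f (i+1)
      = ∑ i ∈ range N, -((-1:ℝ)^i * (N.choose (i+1)) * f (i+1)) := by
    apply Finset.sum_congr rfl; intro i _; ring
  rw [h4]
  simp only [Nat.choose_zero_right, Nat.cast_one]
  ring

private lemma alt_sum_poly_eq_zero' (N : ℕ) (q : Polynomial ℝ) (hq : q.degree < N) :
    ∑ i ∈ range (N+1), (-1:ℝ)^i * (N.choose i) * q.eval (i:ℝ) = 0 := by
  induction N generalizing q with
  | zero =>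
      have hq0 : q = 0 := by
        rw [← Polynomial.degree_eq_bot]
        exact Nat.WithBot.lt_zero_iff.mp (by exact_mod_cast hq)
      simp [hq0]
  | succ N ih =>
      rw [show N + 1 + 1 = N + 2 from rfl, alt_pascal' N (fun i => q.eval (i:ℝ))]
      set q2 : Polynomial ℝ := q - q.comp (X + C 1) with hq2def
      have heval : ∀ i : ℕ, q2.eval (i:ℝ) = q.eval (i:ℝ) - q.eval (((i:ℝ))+1) := by
        intro i
        simp only [hq2def, eval_sub, eval_comp, eval_add, eval_X, eval_C]
      have hX1 : (X + C (1:ℝ)).natDegree = 1 := by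
        exact Polynomial.natDegree_X_add_C 1
      have hdeg : q2.degree < N := by
        rcases eq_or_ne q 0 with h0 | h0
        · simp only [hq2def, h0, Polynomial.zero_comp, sub_zero, Polynomial.degree_zero]
          exact WithBot.bot_lt_coe N
        rcases Nat.eq_zero_or_pos q.natDegree with hd0 | hdpos
        · obtain ⟨c, rfl⟩ := Polynomial.natDegree_eq_zero.mp hd0
          simp only [hq2def, Polynomial.C_comp, sub_self, Polynomial.degree_zero]
          exact WithBot.bot_lt_coe N
        · have hcompne : q.comp (X + C 1) ≠ 0 := by
            intro h
            rcases Polynomial.comp_eq_zero_iff.mp h with h1 | ⟨_, h2⟩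
            · exact h0 h1
            · have : (X + C (1:ℝ)).natDegree = 0 := by rw [h2]; simp
              omega
          have hndeq : (q.comp (X + C 1)).natDegree = q.natDegree := by
            rw [Polynomial.natDegree_comp, hX1, mul_one]
          have hdegeq : (q.comp (X + C 1)).degree = q.degree := by
            rw [Polynomial.degree_eq_natDegree hcompne, Polynomial.degree_eq_natDegree h0, hndeq]
          have hlc : (q.comp (X + C 1)).leadingCoeff = q.leadingCoeff := by
            rw [Polynomial.leadingCoeff_comp (by omega)]
            have : (X + C (1:ℝ)).leadingCoeff = 1 := (Polynomial.monic_X_add_C 1).leadingCoeff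
            rw [this, one_pow, mul_one]
          have h5 : q2.degree < q.degree :=
            Polynomial.degree_sub_lt hdegeq.symm h0 hlc.symm
          have h6 : q.degree ≤ (N : WithBot ℕ) := by
            rw [Polynomial.degree_eq_natDegree h0] at hq ⊢
            exact_mod_cast (by exact_mod_cast Nat.lt_succ_iff.mp (by exact_mod_cast hq) : q.natDegree ≤ N)
          exact lt_of_lt_of_le h5 h6
      calc ∑ i ∈ range (N+1), (-1:ℝ)^i * (N.choose i) *
              ((fun i : ℕ => q.eval (i:ℝ)) i - (fun i : ℕ => q.eval (i:ℝ)) (i+1))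
            = ∑ i ∈ range (N+1), (-1:ℝ)^i * (N.choose i) * q2.eval (i:ℝ) := by
              apply Finset.sum_congr rfl; intro i _
              rw [heval i]; push_cast; ring
        _ = 0 := ih q2 hdeg

private lemma alt_sum_inv' (N : ℕ) : ∀ t : ℝ, 0 < t →
    ∑ i ∈ range (N+1), (-1:ℝ)^i * (N.choose i) / (t + i)
      = (N.factorial) / ∏ i ∈ range (N+1), (t + i) := by
  induction N with
  | zero => intro t ht; simp
  | succ N ih =>
      intro t ht
      have key := alt_pascal' N (fun i => 1 / (t + i))
      have e1 : ∀ i ∈ range (N+2), (-1:ℝ)^i * ((N+1).choose i) / (t + i)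
          = (-1:ℝ)^i * ((N+1).choose i) * (1 / (t + i)) := by
        intro i _; ring
      rw [Finset.sum_congr rfl e1, key]
      have e2 : ∀ i ∈ range (N+1), (-1:ℝ)^i * (N.choose i) * (1/(t+i) - 1/(t+(i+1:ℕ)))
          = (-1:ℝ)^i * (N.choose i) / (t+i) - (-1:ℝ)^i * (N.choose i) / ((t+1)+i) := by
        intro i _; push_cast; ring
      rw [Finset.sum_congr rfl (by intro i hi; exact e2 i hi), Finset.sum_sub_distrib,
        ih t ht, ih (t+1) (by linarith)]
      have hne : ∀ (m : ℕ) (s : ℝ), 0 < s → (∏ i ∈ range m, (s + i)) ≠ 0 := by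
        intro m s hs
        apply Finset.prod_ne_zero_iff.mpr
        intro i _
        positivity
      have hprod1 : ∏ i ∈ range (N+2), (t + i) = (∏ i ∈ range (N+1), (t + i)) * (t + (N+1)) := by
        rw [Finset.prod_range_succ]; push_cast; ring_nf
      have hprod2 : ∏ i ∈ range (N+2), (t + i) = t * ∏ i ∈ range (N+1), ((t+1) + i) := by
        rw [Finset.prod_range_succ' (fun i => t + (i:ℝ)) (N+1)]
        have hc : ∀ i ∈ range (N+1), t + ((i:ℕ)+1 : ℕ) = (t+1) + (i:ℝ) := by
          intro i _; push_cast; ring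
        rw [Finset.prod_congr rfl hc]
        push_cast
        ring
      have hrel : t * (∏ i ∈ range (N+1), ((t+1) + i)) = (∏ i ∈ range (N+1), (t + i)) * (t + (N+1)) := by
        rw [← hprod2, hprod1]
      rw [div_sub_div _ _ (hne _ t ht) (hne _ (t+1) (by linarith))]
      rw [div_eq_div_iff (by
          exact mul_ne_zero (hne _ t ht) (hne _ (t+1) (by linarith))) (hne (N+2) t ht)]
      rw [hprod2]
      have hfact : (((N+1).factorial : ℝ)) = ((N:ℝ)+1) * N.factorial := by
        rw [Nat.factorial_succ]; push_cast; ring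
      rw [hfact]
      linear_combination ((N.factorial : ℝ) * ∏ i ∈ range (N+1), ((t+1) + (i:ℝ))) * hrel

private lemma key_sum' (N a : ℕ) (t : ℝ) (ht : 0 < t) :
    ∑ i ∈ range (N+1), (-1:ℝ)^i * (N.choose i) * ((N+a+i).choose N) / (t + i)
      = (∏ r ∈ range N, ((a:ℝ) + 1 + r - t)) / ∏ i ∈ range (N+1), (t + i) := by
  classical
  obtain ⟨p, hp⟩ : ∃ p : Polynomial ℝ, p = Polynomial.C (((N.factorial : ℝ))⁻¹) *
      ∏ r ∈ range N, (Polynomial.X + Polynomial.C ((a:ℝ) + 1 + r)) := ⟨_, rfl⟩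
  have hNfac : ((N.factorial : ℝ)) ≠ 0 := Nat.cast_ne_zero.mpr N.factorial_ne_zero
  have hpeval : ∀ i : ℕ, p.eval (i:ℝ) = ((N+a+i).choose N : ℝ) := by
    intro i
    have h1 : p.eval (i:ℝ) = ((N.factorial:ℝ))⁻¹ * ∏ r ∈ range N, ((i:ℝ) + ((a:ℝ)+1+r)) := by
      rw [hp, Polynomial.eval_mul, Polynomial.eval_C, Polynomial.eval_prod]
      congr 1
      apply Finset.prod_congr rfl; intro r _
      rw [Polynomial.eval_add, Polynomial.eval_X, Polynomial.eval_C]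
    have h2 : ∏ r ∈ range N, ((i:ℝ) + ((a:ℝ)+1+r)) = ∏ r ∈ range N, (((a+i:ℕ):ℝ) + 1 + r) := by
      apply Finset.prod_congr rfl; intro r _; push_cast; ring
    have h3 := prod_cast_factorial' (a+i) N
    have h4 : ((N+a+i).choose N : ℝ) * (N.factorial :ℝ) * ((a+i).factorial :ℝ)
        = ((N+a+i).factorial : ℝ) := by
      have h := Nat.choose_mul_factorial_mul_factorial (Nat.le_add_right N (a+i))
      rw [Nat.add_sub_cancel_left, ← Nat.add_assoc] at h
      exact_mod_cast h
    have hco : a + i + N = N + a + i := by omega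
    have hfa : (((a+i).factorial :ℝ)) ≠ 0 := Nat.cast_ne_zero.mpr (a+i).factorial_ne_zero
    rw [h1, h2, h3, hco]
    field_simp
    linear_combination (-1:ℝ) * h4
  have hpdeg : p.degree = N := by
    rw [hp, Polynomial.degree_C_mul (inv_ne_zero hNfac), Polynomial.degree_prod]
    have hsc : ∀ r ∈ range N, (Polynomial.X + Polynomial.C ((a:ℝ)+1+(r:ℕ))).degree = 1 := by
      intro r _; exact Polynomial.degree_X_add_C _
    rw [Finset.sum_congr rfl hsc]
    simp
  have hdvd : (Polynomial.X - Polynomial.C (-t)) ∣ p - Polynomial.C (p.eval (-t)) :=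
    Polynomial.X_sub_C_dvd_sub_C_eval
  obtain ⟨q, hq⟩ := hdvd
  have hqdeg : q.degree < N := by
    rcases eq_or_ne q 0 with h0 | h0
    · rw [h0, Polynomial.degree_zero]; exact WithBot.bot_lt_coe N
    · have hle : ((Polynomial.X - Polynomial.C (-t)) * q).degree ≤ (N : WithBot ℕ) := by
        rw [← hq]
        refine le_trans (Polynomial.degree_sub_le _ _) ?_
        rw [hpdeg]
        exact max_le le_rfl (le_trans Polynomial.degree_C_le (by exact_mod_cast Nat.zero_le N))
      rw [Polynomial.degree_mul, Polynomial.degree_X_sub_C,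
        Polynomial.degree_eq_natDegree h0] at hle
      rw [Polynomial.degree_eq_natDegree h0]
      have : 1 + q.natDegree ≤ N := by exact_mod_cast hle
      exact_mod_cast Nat.lt_of_lt_of_le (Nat.lt_succ_self _) (by omega)
  have hterm : ∀ i ∈ range (N+1), (-1:ℝ)^i * (N.choose i) * ((N+a+i).choose N) / (t + i)
      = (-1:ℝ)^i * (N.choose i) * q.eval (i:ℝ)
        + p.eval (-t) * ((-1:ℝ)^i * (N.choose i) / (t + i)) := by
    intro i hi
    have hti : t + (i:ℝ) ≠ 0 := by positivity
    have h5 : p.eval (i:ℝ) - p.eval (-t) = (t + i) * q.eval (i:ℝ) := by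
      have h := congrArg (Polynomial.eval (i:ℝ)) hq
      simp only [Polynomial.eval_sub, Polynomial.eval_mul, Polynomial.eval_C,
        Polynomial.eval_X] at h
      rw [h]; ring
    rw [← hpeval i]
    rw [show p.eval (i:ℝ) = p.eval (-t) + (t + i) * q.eval (i:ℝ) by linarith [h5]]
    field_simp
    ring
  rw [Finset.sum_congr rfl hterm, Finset.sum_add_distrib, ← Finset.mul_sum,
    alt_sum_poly_eq_zero' N q hqdeg, alt_sum_inv' N t ht]
  have hpt : p.eval (-t) = ((N.factorial:ℝ))⁻¹ * ∏ r ∈ range N, ((a:ℝ) + 1 + r - t) := by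
    rw [hp, Polynomial.eval_mul, Polynomial.eval_C, Polynomial.eval_prod]
    congr 1
    apply Finset.prod_congr rfl; intro r _
    rw [Polynomial.eval_add, Polynomial.eval_X, Polynomial.eval_C]; ring
  have hprodne : (∏ i ∈ range (N+1), (t + (i:ℝ))) ≠ 0 :=
    Finset.prod_ne_zero_iff.mpr (fun i _ => by positivity)
  rw [hpt]
  field_simp
  ring

private lemma key_zero' (N a t : ℕ) (h1 : a + 1 ≤ t) (h2 : t ≤ a + N) :
    ∑ i ∈ range (N+1), (-1:ℝ)^i * (N.choose i) * ((N+a+i).choose N) / ((t:ℝ) + i) = 0 := by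
  rw [key_sum' N a t (by exact_mod_cast Nat.lt_of_lt_of_le (Nat.succ_le_iff.mp (le_trans (Nat.le_add_left 1 a) h1)) le_rfl)]
  rw [Finset.prod_eq_zero (i := t - a - 1) (by simp [Finset.mem_range]; omega)
    (by rw [show t - a - 1 = t - (a+1) from by omega, Nat.cast_sub (by omega : a+1 ≤ t)]; push_cast; ring)]
  simp

private lemma key_diag' (N a : ℕ) (ha : 1 ≤ a) :
    ∑ i ∈ range (N+1), (-1:ℝ)^i * (N.choose i) * ((N+a+i).choose N) / ((a:ℝ) + i)
      = (N.factorial) * (a-1).factorial / (a + N).factorial := by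
  have ha' : (0:ℝ) < a := by exact_mod_cast ha
  rw [key_sum' N a a ha']
  have hnum : ∏ r ∈ range N, ((a:ℝ) + 1 + r - a) = N.factorial := by
    have : ∀ r ∈ range N, ((a:ℝ) + 1 + r - a) = ((0:ℕ):ℝ) + 1 + r := by
      intro r _; push_cast; ring
    rw [Finset.prod_congr rfl this, prod_cast_factorial' 0 N]
    simp
  have hden : ∏ i ∈ range (N+1), ((a:ℝ) + i) = (a + N).factorial / (a-1).factorial := by
    have : ∀ i ∈ range (N+1), ((a:ℝ) + i) = (((a-1:ℕ)):ℝ) + 1 + i := by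
      intro i _; push_cast [Nat.cast_sub ha]; ring
    rw [Finset.prod_congr rfl this, prod_cast_factorial' (a-1) (N+1),
      show a - 1 + (N+1) = a + N from by omega]
  rw [hnum, hden]
  have h1 : ((a-1).factorial : ℝ) ≠ 0 := Nat.cast_ne_zero.mpr (a-1).factorial_ne_zero
  have h2 : ((a+N).factorial : ℝ) ≠ 0 := Nat.cast_ne_zero.mpr (a+N).factorial_ne_zero
  field_simp

private lemma aux_mul' (S T : Finset ℕ) (f g : ℕ → ℝ) (ek el : ℕ → ℕ) (x : ℝ) (hx : x ≠ 0)
    (E : ℕ → ℕ → ℕ) (hE : ∀ j i, ek j + el i = E j i + 1) :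
    (1/x * ∑ j ∈ S, f j * x^(ek j)) * ∑ i ∈ T, g i * x^(el i)
      = ∑ j ∈ S, ∑ i ∈ T, f j * g i * x^(E j i) := by
  have h1 : (1/x * ∑ j ∈ S, f j * x^(ek j)) * ∑ i ∈ T, g i * x^(el i)
      = (∑ j ∈ S, ∑ i ∈ T, (f j * x^(ek j)) * (g i * x^(el i))) / x := by
    rw [← Finset.sum_mul_sum]; ring
  rw [h1, Finset.sum_div]
  apply Finset.sum_congr rfl; intro j _
  rw [Finset.sum_div]
  apply Finset.sum_congr rfl; intro i _
  rw [div_eq_iff hx]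
  have h2 : x^(ek j) * x^(el i) = x^(E j i) * x := by
    rw [← pow_succ, ← pow_add, hE j i]
  calc (f j * x^(ek j)) * (g i * x^(el i)) = f j * g i * (x^(ek j) * x^(el i)) := by ring
    _ = f j * g i * x^(E j i) * x := by rw [h2]; ring

end AKindAux

/-- A-kind orthogonal polynomials. -/
noncomputable def aKind (n k : ℕ) (x : ℝ) : ℝ :=
  ∑ j ∈ Finset.range (n - k + 1),
    (-1 : ℝ) ^ j * ((n - k).choose j : ℝ) * ((n + k + j).choose (n - k) : ℝ) * x ^ (k + j)

section AKindAux2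
open Finset

private lemma integral_eq_double_sum' (n k l : ℕ) (hl1 : 1 ≤ l) :
    ∫ x in (0:ℝ)..1, (1/x) * aKind n k x * aKind n l x
      = ∑ j ∈ range (n-k+1), ∑ i ∈ range (n-l+1),
          ((-1:ℝ)^j * ((n-k).choose j) * ((n+k+j).choose (n-k))) *
          ((-1:ℝ)^i * ((n-l).choose i) * ((n+l+i).choose (n-l))) / ((k:ℝ)+l+j+i) := by
  have hcong : ∀ x ∈ Set.Ioc (0:ℝ) 1,
      (1/x) * aKind n k x * aKind n l x
        = ∑ j ∈ range (n-k+1), ∑ i ∈ range (n-l+1),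
            ((-1:ℝ)^j * ((n-k).choose j) * ((n+k+j).choose (n-k))) *
            ((-1:ℝ)^i * ((n-l).choose i) * ((n+l+i).choose (n-l))) * x ^ (k+l+j+i-1) := by
    intro x hx
    have hx0 : x ≠ 0 := ne_of_gt hx.1
    unfold aKind
    exact aux_mul' _ _ (fun j => (-1:ℝ)^j * ((n-k).choose j) * ((n+k+j).choose (n-k)))
      (fun i => (-1:ℝ)^i * ((n-l).choose i) * ((n+l+i).choose (n-l)))
      (fun j => k + j) (fun i => l + i) x hx0 (fun j i => k+l+j+i-1)
      (by intro j i; show k + j + (l + i) = k+l+j+i-1+1; omega)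
  rw [intervalIntegral.integral_of_le (by norm_num : (0:ℝ) ≤ 1)]
  rw [MeasureTheory.setIntegral_congr_fun measurableSet_Ioc hcong]
  rw [← intervalIntegral.integral_of_le (by norm_num : (0:ℝ) ≤ 1)]
  rw [intervalIntegral.integral_finset_sum]
  · apply Finset.sum_congr rfl; intro j _
    rw [intervalIntegral.integral_finset_sum]
    · apply Finset.sum_congr rfl; intro i _
      have he : k+l+j+i-1 + 1 = k+l+j+i := by omega
      have he' : ((k+l+j+i-1:ℕ):ℝ) + 1 = (k:ℝ)+l+j+i := by
        rw [show ((k+l+j+i-1:ℕ):ℝ) + 1 = (((k+l+j+i-1)+1 : ℕ):ℝ) from by push_cast; ring, he]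
        push_cast; ring
      rw [intervalIntegral.integral_const_mul, integral_pow, one_pow,
        zero_pow (by omega : k+l+j+i-1+1 ≠ 0), he']
      ring
    · intro i _
      exact ((continuous_const.mul (continuous_pow _)).intervalIntegrable 0 1)
  · intro j _
    exact ((continuous_finset_sum _ (fun i _ =>
      continuous_const.mul (continuous_pow _))).intervalIntegrable 0 1)

end AKindAux2

theorem stmt_13 (n k l : ℕ) (hk : k ≤ n) (hl1 : 1 ≤ l) (hl : l ≤ n) :
    (k ≠ l → ∫ x in (0 : ℝ)..1, (1 / x) * aKind n k x * aKind n l x = 0) ∧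
    (1 ≤ k → ∫ x in (0 : ℝ)..1, (1 / x) * aKind n k x * aKind n k x = 1 / (2 * k)) := by
  constructor
  · intro hne
    rw [integral_eq_double_sum' n k l hl1]
    rcases Nat.lt_or_ge k l with hkl | hkl
    · -- k < l : sum over j vanishes for each i
      rw [Finset.sum_comm]
      apply Finset.sum_eq_zero
      intro i hi
      have hi' : i ≤ n - l := Nat.lt_succ_iff.mp (Finset.mem_range.mp hi)
      have h0 := key_zero' (n-k) (2*k) (k+l+i) (by omega) (by omega)
      calc ∑ j ∈ Finset.range (n-k+1),
              ((-1:ℝ)^j * ((n-k).choose j) * ((n+k+j).choose (n-k))) *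
              ((-1:ℝ)^i * ((n-l).choose i) * ((n+l+i).choose (n-l))) / ((k:ℝ)+l+j+i)
            = ((-1:ℝ)^i * ((n-l).choose i) * ((n+l+i).choose (n-l))) *
              ∑ j ∈ Finset.range (n-k+1),
                (-1:ℝ)^j * ((n-k).choose j) * (((n-k)+2*k+j).choose (n-k)) / (((k+l+i:ℕ):ℝ)+j) := by
              rw [Finset.mul_sum]
              apply Finset.sum_congr rfl; intro j _
              rw [show (n-k)+2*k+j = n+k+j from by omega]
              push_cast; ring
        _ = 0 := by rw [h0]; ring
    · -- k > l : sum over i vanishes for each j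
      have hkl' : l < k := lt_of_le_of_ne hkl (fun h => hne h.symm)
      apply Finset.sum_eq_zero
      intro j hj
      have hj' : j ≤ n - k := Nat.lt_succ_iff.mp (Finset.mem_range.mp hj)
      have h0 := key_zero' (n-l) (2*l) (k+l+j) (by omega) (by omega)
      calc ∑ i ∈ Finset.range (n-l+1),
              ((-1:ℝ)^j * ((n-k).choose j) * ((n+k+j).choose (n-k))) *
              ((-1:ℝ)^i * ((n-l).choose i) * ((n+l+i).choose (n-l))) / ((k:ℝ)+l+j+i)
            = ((-1:ℝ)^j * ((n-k).choose j) * ((n+k+j).choose (n-k))) *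
              ∑ i ∈ Finset.range (n-l+1),
                (-1:ℝ)^i * ((n-l).choose i) * (((n-l)+2*l+i).choose (n-l)) / (((k+l+j:ℕ):ℝ)+i) := by
              rw [Finset.mul_sum]
              apply Finset.sum_congr rfl; intro i _
              rw [show (n-l)+2*l+i = n+l+i from by omega]
              push_cast; ring
        _ = 0 := by rw [h0]; ring
  · intro hk1
    rw [integral_eq_double_sum' n k k hk1]
    rw [Finset.sum_eq_single_of_mem 0 (Finset.mem_range.mpr (by omega))]
    · have h0 := key_diag' (n-k) (2*k) (by omega)
      calc ∑ i ∈ Finset.range (n-k+1),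
              ((-1:ℝ)^0 * ((n-k).choose 0) * ((n+k+0).choose (n-k))) *
              ((-1:ℝ)^i * ((n-k).choose i) * ((n+k+i).choose (n-k))) / ((k:ℝ)+k+((0:ℕ):ℝ)+i)
            = ((n+k).choose (n-k) : ℝ) *
              ∑ i ∈ Finset.range (n-k+1),
                (-1:ℝ)^i * ((n-k).choose i) * (((n-k)+2*k+i).choose (n-k)) / (((2*k:ℕ):ℝ)+i) := by
              rw [Finset.mul_sum]
              apply Finset.sum_congr rfl; intro i _
              rw [show (n-k)+2*k+i = n+k+i from by omega]
              push_cast [Nat.choose_zero_right]; ring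
        _ = ((n+k).choose (n-k) : ℝ) *
              (((n-k).factorial : ℝ) * ((2*k-1).factorial : ℝ) / ((2*k + (n-k)).factorial : ℝ)) := by
              rw [h0]
        _ = 1 / (2 * k) := by
              have hc : ((n+k).choose (n-k) : ℝ) * ((n-k).factorial : ℝ) * ((2*k).factorial : ℝ)
                  = ((n+k).factorial : ℝ) := by
                have h := Nat.choose_mul_factorial_mul_factorial
                  (show n - k ≤ n + k from by omega)
                rw [show n + k - (n-k) = 2*k from by omega] at h
                exact_mod_cast h
              have hf2 : ((2*k).factorial : ℝ) = (2*(k:ℝ)) * ((2*k-1).factorial : ℝ) := by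
                rw [show 2*k = (2*k-1)+1 from by omega, Nat.factorial_succ]
                push_cast [show 2*k-1+1 = 2*k from by omega]
                ring
              rw [show 2*k + (n-k) = n+k from by omega]
              have hne1 : ((n+k).factorial : ℝ) ≠ 0 := Nat.cast_ne_zero.mpr (n+k).factorial_ne_zero
              have hne2 : ((2*k-1).factorial : ℝ) ≠ 0 := Nat.cast_ne_zero.mpr (2*k-1).factorial_ne_zero
              have hne3 : (2*(k:ℝ)) ≠ 0 := by positivity
              field_simp
              linear_combination hc - (((n+k).choose (n-k) : ℝ) * ((n-k).factorial : ℝ)) * hf2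
    · intro j hj hjne
      have hj' : j ≤ n - k := Nat.lt_succ_iff.mp (Finset.mem_range.mp hj)
      have h0 := key_zero' (n-k) (2*k) (2*k+j) (by omega) (by omega)
      calc ∑ i ∈ Finset.range (n-k+1),
              ((-1:ℝ)^j * ((n-k).choose j) * ((n+k+j).choose (n-k))) *
              ((-1:ℝ)^i * ((n-k).choose i) * ((n+k+i).choose (n-k))) / ((k:ℝ)+k+j+i)
            = ((-1:ℝ)^j * ((n-k).choose j) * ((n+k+j).choose (n-k))) *
              ∑ i ∈ Finset.range (n-k+1),
                (-1:ℝ)^i * ((n-k).choose i) * (((n-k)+2*k+i).choose (n-k)) / (((2*k+j:ℕ):ℝ)+i) := by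
              rw [Finset.mul_sum]
              apply Finset.sum_congr rfl; intro i _
              rw [show (n-k)+2*k+i = n+k+i from by omega]
              push_cast; ring
        _ = 0 := by rw [h0]; ring
end

section
/- For integers 1 ≤ k ≤ n, the A-kind polynomials satisfy ∫₀¹ (1/x) A_{nk}(x) dx = 1/k. -/
open Real MeasureTheory

/-- WZ certificate for the key combinatorial identity. -/
noncomputable def Gfun (k m j : ℕ) : ℝ :=
  (-1 : ℝ) ^ (j + 1) * (2 * j * (j + 2 * k)) * (((m + 1).choose j : ℝ)) *
    (((m + 2 * k + j).choose m : ℝ)) / (((m : ℝ) + 1) ^ 2 * ((m : ℝ) + 2 * k + 1))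

lemma step (k m j : ℕ) (hk : 1 ≤ k) (hj : j ≤ m + 1) :
    ((-1 : ℝ) ^ j * ((m + 1).choose j : ℝ) * ((m + 1 + 2 * k + j).choose (m + 1) : ℝ)) /
        ((k : ℝ) + j)
      - ((-1 : ℝ) ^ j * (m.choose j : ℝ) * ((m + 2 * k + j).choose m : ℝ)) / ((k : ℝ) + j)
    = Gfun k m (j + 1) - Gfun k m j := by
  have hidx : m + 1 + 2 * k + j = (m + 2 * k + j) + 1 := by omega
  have hR2 : ((m.choose j : ℝ)) * ((m : ℝ) + 1) =
      ((m + 1).choose j : ℝ) * ((m : ℝ) + 1 - j) := by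
    have h := Nat.choose_mul_succ_eq m j
    calc ((m.choose j : ℝ)) * ((m : ℝ) + 1) = ((m.choose j * (m + 1) : ℕ) : ℝ) := by push_cast; ring
    _ = (((m + 1).choose j * (m + 1 - j) : ℕ) : ℝ) := by rw [h]
    _ = ((m + 1).choose j : ℝ) * ((m : ℝ) + 1 - j) := by push_cast [Nat.cast_sub hj]; ring
  have hR1 : (((m + 1).choose (j + 1) : ℝ)) * ((j : ℝ) + 1) =
      ((m + 1).choose j : ℝ) * ((m : ℝ) + 1 - j) := by
    have h := Nat.choose_succ_right_eq (m + 1) j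
    calc (((m + 1).choose (j + 1) : ℝ)) * ((j : ℝ) + 1)
        = (((m + 1).choose (j + 1) * (j + 1) : ℕ) : ℝ) := by push_cast; ring
    _ = (((m + 1).choose j * (m + 1 - j) : ℕ) : ℝ) := by rw [h]
    _ = ((m + 1).choose j : ℝ) * ((m : ℝ) + 1 - j) := by push_cast [Nat.cast_sub hj]; ring
  have hR3 : (((m + 2 * k + j + 1).choose m : ℝ)) * (2 * (k : ℝ) + j + 1) =
      ((m + 2 * k + j).choose m : ℝ) * ((m : ℝ) + 2 * k + j + 1) := by
    have h := Nat.choose_mul_succ_eq (m + 2 * k + j) m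
    have hsub : m + 2 * k + j + 1 - m = 2 * k + j + 1 := by omega
    rw [hsub] at h
    calc (((m + 2 * k + j + 1).choose m : ℝ)) * (2 * (k : ℝ) + j + 1)
        = (((m + 2 * k + j + 1).choose m * (2 * k + j + 1) : ℕ) : ℝ) := by push_cast; ring
    _ = (((m + 2 * k + j).choose m * (m + 2 * k + j + 1) : ℕ) : ℝ) := by rw [← h]
    _ = ((m + 2 * k + j).choose m : ℝ) * ((m : ℝ) + 2 * k + j + 1) := by push_cast; ring
  have hR4 : (((m + 1 + 2 * k + j).choose (m + 1) : ℝ)) * ((m : ℝ) + 1) =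
      ((m + 2 * k + j).choose m : ℝ) * ((m : ℝ) + 2 * k + j + 1) := by
    have h := Nat.add_one_mul_choose_eq (m + 2 * k + j) m
    rw [hidx]
    calc (((m + 2 * k + j + 1).choose (m + 1) : ℝ)) * ((m : ℝ) + 1)
        = (((m + 2 * k + j + 1).choose (m + 1) * (m + 1) : ℕ) : ℝ) := by push_cast; ring
    _ = (((m + 2 * k + j + 1) * (m + 2 * k + j).choose m : ℕ) : ℝ) := by rw [← h]
    _ = ((m + 2 * k + j).choose m : ℝ) * ((m : ℝ) + 2 * k + j + 1) := by push_cast; ring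
  set a : ℝ := ((m + 1).choose j : ℝ) with ha
  set b : ℝ := ((m + 2 * k + j).choose m : ℝ) with hb
  have hm1 : (m : ℝ) + 1 ≠ 0 := by positivity
  have hj1 : (j : ℝ) + 1 ≠ 0 := by positivity
  have hkj : (k : ℝ) + j ≠ 0 := by
    have : (1 : ℝ) ≤ (k : ℝ) := by exact_mod_cast hk
    positivity
  have h2k : 2 * (k : ℝ) + j + 1 ≠ 0 := by positivity
  have hD : (m : ℝ) + 2 * k + 1 ≠ 0 := by positivity
  have he : (m.choose j : ℝ) = a * ((m : ℝ) + 1 - j) / ((m : ℝ) + 1) := by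
    field_simp; linarith [hR2]
  have hd1 : ((m + 1).choose (j + 1) : ℝ) = a * ((m : ℝ) + 1 - j) / ((j : ℝ) + 1) := by
    field_simp; linarith [hR1]
  have hc1 : ((m + 2 * k + j + 1).choose m : ℝ)
      = b * ((m : ℝ) + 2 * k + j + 1) / (2 * (k : ℝ) + j + 1) := by
    field_simp; linarith [hR3]
  have hf : ((m + 1 + 2 * k + j).choose (m + 1) : ℝ)
      = b * ((m : ℝ) + 2 * k + j + 1) / ((m : ℝ) + 1) := by
    field_simp; linarith [hR4]
  have hidx2 : m + 2 * k + (j + 1) = m + 2 * k + j + 1 := rfl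
  unfold Gfun
  rw [hidx2, hf, he, hd1, hc1]
  push_cast
  rw [pow_succ, pow_succ]
  field_simp
  ring

lemma key_s14 (k : ℕ) (hk : 1 ≤ k) (m : ℕ) :
    ∑ j ∈ Finset.range (m + 1),
      ((-1 : ℝ) ^ j * (m.choose j : ℝ) * ((m + 2 * k + j).choose m : ℝ)) / ((k : ℝ) + j)
    = 1 / (k : ℝ) := by
  induction m with
  | zero => simp
  | succ m ih =>
    have h0 : ∑ j ∈ Finset.range (m + 2),
        ((-1 : ℝ) ^ j * ((m + 1).choose j : ℝ) * ((m + 1 + 2 * k + j).choose (m + 1) : ℝ)) /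
          ((k : ℝ) + j)
        - ∑ j ∈ Finset.range (m + 2),
        ((-1 : ℝ) ^ j * (m.choose j : ℝ) * ((m + 2 * k + j).choose m : ℝ)) / ((k : ℝ) + j)
        = 0 := by
      rw [← Finset.sum_sub_distrib]
      have hcong : ∀ j ∈ Finset.range (m + 2),
          ((-1 : ℝ) ^ j * ((m + 1).choose j : ℝ) * ((m + 1 + 2 * k + j).choose (m + 1) : ℝ)) /
            ((k : ℝ) + j)
          - ((-1 : ℝ) ^ j * (m.choose j : ℝ) * ((m + 2 * k + j).choose m : ℝ)) / ((k : ℝ) + j)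
          = Gfun k m (j + 1) - Gfun k m j := by
        intro j hj
        exact step k m j hk (by simpa using Nat.lt_succ_iff.mp (Finset.mem_range.mp hj))
      rw [Finset.sum_congr rfl hcong, Finset.sum_range_sub (Gfun k m)]
      have h1 : Gfun k m (m + 2) = 0 := by
        rw [Gfun]
        simp [Nat.choose_eq_zero_of_lt (by omega : m + 1 < m + 2)]
      have h2 : Gfun k m 0 = 0 := by rw [Gfun]; simp
      rw [h1, h2]; ring
    have h2 : ∑ j ∈ Finset.range (m + 2),
        ((-1 : ℝ) ^ j * (m.choose j : ℝ) * ((m + 2 * k + j).choose m : ℝ)) / ((k : ℝ) + j)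
        = 1 / (k : ℝ) := by
      rw [Finset.sum_range_succ, ih]
      simp [Nat.choose_eq_zero_of_lt (by omega : m < m + 1)]
    have := h0
    rw [h2] at this
    have goal : ∑ j ∈ Finset.range (m + 2),
        ((-1 : ℝ) ^ j * ((m + 1).choose j : ℝ) * ((m + 1 + 2 * k + j).choose (m + 1) : ℝ)) /
          ((k : ℝ) + j) = 1 / (k : ℝ) := by linarith
    exact goal

theorem stmt_14 (n k : ℕ) (hk1 : 1 ≤ k) (hk : k ≤ n) :
    ∫ x in (0 : ℝ)..1, (1 / x) * aKind n k x = 1 / k := by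
  set m := n - k with hm
  set c : ℕ → ℝ := fun j =>
    (-1 : ℝ) ^ j * ((n - k).choose j : ℝ) * ((n + k + j).choose (n - k) : ℝ) with hc
  have hcongr : ∫ x in (0 : ℝ)..1, (1 / x) * aKind n k x
      = ∫ x in (0 : ℝ)..1, ∑ j ∈ Finset.range (m + 1), c j * x ^ (k - 1 + j) := by
    apply intervalIntegral.integral_congr_ae
    filter_upwards with x hx
    rw [Set.uIoc_of_le (by norm_num : (0:ℝ) ≤ 1)] at hx
    have hx0 : x ≠ 0 := ne_of_gt hx.1
    unfold aKind
    rw [Finset.mul_sum]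
    apply Finset.sum_congr rfl
    intro j _
    have hkj : k + j = (k - 1 + j) + 1 := by omega
    rw [hkj, pow_succ]
    field_simp [hc]
    ring
  rw [hcongr]
  have hint : ∀ j ∈ Finset.range (m + 1),
      IntervalIntegrable (fun x : ℝ => c j * x ^ (k - 1 + j)) volume 0 1 := by
    intro j _
    exact (intervalIntegral.intervalIntegrable_pow _).const_mul _
  rw [intervalIntegral.integral_finset_sum hint]
  have heval : ∀ j ∈ Finset.range (m + 1),
      ∫ x in (0:ℝ)..1, c j * x ^ (k - 1 + j) = c j / ((k : ℝ) + j) := by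
    intro j _
    rw [intervalIntegral.integral_const_mul, integral_pow]
    have : ((k - 1 + j : ℕ) : ℝ) + 1 = (k : ℝ) + j := by
      push_cast [Nat.cast_sub hk1]; ring
    rw [this]
    norm_num [div_eq_mul_inv]
  rw [Finset.sum_congr rfl heval]
  have hnk : ∀ j, n + k + j = m + 2 * k + j := by intro j; omega
  have := key_s14 k hk1 m
  calc ∑ j ∈ Finset.range (m + 1), c j / ((k : ℝ) + j)
      = ∑ j ∈ Finset.range (m + 1),
        ((-1 : ℝ) ^ j * (m.choose j : ℝ) * ((m + 2 * k + j).choose m : ℝ)) / ((k : ℝ) + j) := by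
        apply Finset.sum_congr rfl
        intro j _
        rw [hc]
        simp only [← hm, hnk j]
    _ = 1 / (k : ℝ) := this
end

section
/- For integers 1 ≤ k ≤ n-1 and x ∈ (0,1], the A-kind polynomials satisfy the three-term recurrence (2k+1)(n+k)(n-k+1) A_{n,k-1}(x) = 2k[(2k-1)(2k+1)x^{-1} - 2(n²+k²+n)] A_{nk}(x) - (2k-1)(n-k)(n+k+1) A_{n,k+1}(x), together with A_{nn}(x) = x^n and A_{n,n-1}(x) = (2n-1)x^{n-1} - 2n x^n. -/
open Real MeasureTheory

open Nat

lemma cc (a b c : ℕ) (h : a = b + c) : ((a.choose b : ℕ) : ℝ) = a ! / (b ! * c !) := by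
  subst h
  rw [Nat.cast_choose ℝ (Nat.le_add_right _ _), Nat.add_sub_cancel_left]

lemma key_s15 (K r j : ℕ) :
    (2*(K:ℝ)+3) * (2*K+j+r+3) * (j+r+2) * ((j+r+2).choose (j+2)) * ((2*K+2*j+r+4).choose (j+r+2))
  = 2*(K+1)*(2*K+1)*(2*K+3) * ((j+r+1).choose (j+2)) * ((2*K+2*j+r+5).choose (j+r+1))
  + 4*(K+1)*((K+j+r+2)^2+(K+1)^2+(K+j+r+2)) * ((j+r+1).choose (j+1)) * ((2*K+2*j+r+4).choose (j+r+1))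
  - (2*K+1)*(j+r+1)*(2*K+j+r+4) * ((j+r).choose j) * ((2*K+2*j+r+4).choose (j+r)) := by
  have pascal : ((j+r+1).choose (j+2) : ℝ) = (j+r+2).choose (j+2) - (j+r+1).choose (j+1) := by
    have h : (j+r+2).choose (j+2) = (j+r+1).choose (j+1) + (j+r+1).choose (j+2) := by
      simpa [Nat.succ_eq_add_one] using Nat.choose_succ_succ (j+r+1) (j+1)
    rw [h]
    push_cast; ring
  rw [pascal,
    cc (j+r+2) (j+2) r (by omega),
    cc (2*K+2*j+r+4) (j+r+2) (2*K+j+2) (by omega),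
    cc (2*K+2*j+r+5) (j+r+1) (2*K+j+4) (by omega),
    cc (j+r+1) (j+1) r (by omega),
    cc (2*K+2*j+r+4) (j+r+1) (2*K+j+3) (by omega),
    cc (j+r) j r (by omega),
    cc (2*K+2*j+r+4) (j+r) (2*K+j+4) (by omega)]
  have f1 : (j+r+2)! = (j+r+2)*(j+r+1)! := by rw [show j+r+2 = (j+r+1)+1 by omega, Nat.factorial_succ]
  have f2 : (j+r+1)! = (j+r+1)*(j+r)! := by rw [show j+r+1 = (j+r)+1 by omega, Nat.factorial_succ]
  have f3 : (j+2)! = (j+2)*((j+1)*(j)!) := by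
    rw [show j+2 = (j+1)+1 by omega, Nat.factorial_succ, Nat.factorial_succ]
  have f4 : (j+1)! = (j+1)*(j)! := by rw [Nat.factorial_succ]
  have f5 : (2*K+2*j+r+5)! = (2*K+2*j+r+5)*(2*K+2*j+r+4)! := by
    rw [show 2*K+2*j+r+5 = (2*K+2*j+r+4)+1 by omega, Nat.factorial_succ]
  have f6 : (2*K+j+4)! = (2*K+j+4)*((2*K+j+3)*(2*K+j+2)!) := by
    rw [show 2*K+j+4 = (2*K+j+3)+1 by omega, Nat.factorial_succ,
        show 2*K+j+3 = (2*K+j+2)+1 by omega, Nat.factorial_succ]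
  have f7 : (2*K+j+3)! = (2*K+j+3)*(2*K+j+2)! := by
    rw [show 2*K+j+3 = (2*K+j+2)+1 by omega, Nat.factorial_succ]
  rw [f1, f2, f3, f4, f5, f6, f7]
  have n1 : ((j)! : ℝ) ≠ 0 := Nat.cast_ne_zero.2 (Nat.factorial_ne_zero _)
  have n2 : ((r)! : ℝ) ≠ 0 := Nat.cast_ne_zero.2 (Nat.factorial_ne_zero _)
  have n3 : (((j+r))! : ℝ) ≠ 0 := Nat.cast_ne_zero.2 (Nat.factorial_ne_zero _)
  have n4 : (((2*K+j+2))! : ℝ) ≠ 0 := Nat.cast_ne_zero.2 (Nat.factorial_ne_zero _)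
  have n5 : (((2*K+2*j+r+4))! : ℝ) ≠ 0 := Nat.cast_ne_zero.2 (Nat.factorial_ne_zero _)
  push_cast
  field_simp
  ring

lemma key0 (K M : ℕ) :
    (2*(K:ℝ)+3)*(2*K+M+3)*(M+2) * ((2*K+M+2).choose (M+2) : ℝ)
  = 2*(K+1)*(2*K+1)*(2*K+3) * ((2*K+M+3).choose (M+1) : ℝ) := by
  rw [cc (2*K+M+2) (M+2) (2*K) (by omega), cc (2*K+M+3) (M+1) (2*K+2) (by omega)]
  have f1 : (2*K+M+3)! = (2*K+M+3)*(2*K+M+2)! := by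
    rw [show 2*K+M+3 = (2*K+M+2)+1 by omega, Nat.factorial_succ]
  have f2 : (M+2)! = (M+2)*(M+1)! := by rw [show M+2 = (M+1)+1 by omega, Nat.factorial_succ]
  have f3 : (2*K+2)! = (2*K+2)*((2*K+1)*(2*K)!) := by
    rw [show 2*K+2 = (2*K+1)+1 by omega, Nat.factorial_succ,
        show 2*K+1 = (2*K)+1 by omega, Nat.factorial_succ]
  rw [f1, f2, f3]
  have n1 : (((2*K+M+2))! : ℝ) ≠ 0 := Nat.cast_ne_zero.2 (Nat.factorial_ne_zero _)
  have n2 : (((M+1))! : ℝ) ≠ 0 := Nat.cast_ne_zero.2 (Nat.factorial_ne_zero _)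
  have n3 : (((2*K))! : ℝ) ≠ 0 := Nat.cast_ne_zero.2 (Nat.factorial_ne_zero _)
  push_cast
  field_simp
  try ring

lemma key1 (K M : ℕ) :
    (2*(K:ℝ)+3)*(2*K+M+3)*(M+2) * ((M:ℝ)+2) * ((2*K+M+3).choose (M+2) : ℝ)
  = 2*(K+1)*(2*K+1)*(2*K+3) * ((M:ℝ)+1) * ((2*K+M+4).choose (M+1) : ℝ)
  + 4*(K+1)*((K+M+2)^2+(K+1)^2+(K+M+2)) * ((2*K+M+3).choose (M+1) : ℝ) := by
  rw [cc (2*K+M+3) (M+2) (2*K+1) (by omega), cc (2*K+M+4) (M+1) (2*K+3) (by omega),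
      cc (2*K+M+3) (M+1) (2*K+2) (by omega)]
  have f1 : (2*K+M+4)! = (2*K+M+4)*(2*K+M+3)! := by
    rw [show 2*K+M+4 = (2*K+M+3)+1 by omega, Nat.factorial_succ]
  have f2 : (M+2)! = (M+2)*(M+1)! := by rw [show M+2 = (M+1)+1 by omega, Nat.factorial_succ]
  have f3 : (2*K+3)! = (2*K+3)*((2*K+2)*(2*K+1)!) := by
    rw [show 2*K+3 = (2*K+2)+1 by omega, Nat.factorial_succ,
        show 2*K+2 = (2*K+1)+1 by omega, Nat.factorial_succ]
  have f4 : (2*K+2)! = (2*K+2)*(2*K+1)! := by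
    rw [show 2*K+2 = (2*K+1)+1 by omega, Nat.factorial_succ]
  rw [f1, f2, f3, f4]
  have n1 : (((2*K+M+3))! : ℝ) ≠ 0 := Nat.cast_ne_zero.2 (Nat.factorial_ne_zero _)
  have n2 : (((M+1))! : ℝ) ≠ 0 := Nat.cast_ne_zero.2 (Nat.factorial_ne_zero _)
  have n3 : (((2*K+1))! : ℝ) ≠ 0 := Nat.cast_ne_zero.2 (Nat.factorial_ne_zero _)
  push_cast
  field_simp
  ring

theorem stmt_15 (n k : ℕ) (hk1 : 1 ≤ k) (hk2 : k ≤ n - 1)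
    (x : ℝ) (hx : x ∈ Set.Ioc (0 : ℝ) 1) :
    (2 * (k : ℝ) + 1) * ((n : ℝ) + k) * ((n : ℝ) - k + 1) * aKind n (k - 1) x =
        2 * (k : ℝ) *
          ((2 * (k : ℝ) - 1) * (2 * (k : ℝ) + 1) * x⁻¹ -
            2 * ((n : ℝ) ^ 2 + (k : ℝ) ^ 2 + n)) * aKind n k x -
        (2 * (k : ℝ) - 1) * ((n : ℝ) - k) * ((n : ℝ) + k + 1) * aKind n (k + 1) x ∧
    aKind n n x = x ^ n ∧
    aKind n (n - 1) x = (2 * (n : ℝ) - 1) * x ^ (n - 1) - 2 * (n : ℝ) * x ^ n := by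
  obtain ⟨hx0, hx1⟩ := hx
  have hxne : x ≠ 0 := ne_of_gt hx0
  obtain ⟨K, rfl⟩ : ∃ K, k = K + 1 := ⟨k - 1, by omega⟩
  obtain ⟨M, rfl⟩ : ∃ M, n = K + M + 2 := ⟨n - K - 2, by omega⟩
  refine ⟨?_, ?_, ?_⟩
  · -- main recurrence
    simp only [Nat.add_sub_cancel, aKind]
    rw [show K + M + 2 - K = M + 2 from by omega, show K + M + 2 - (K+1) = M + 1 from by omega,
        show K + M + 2 - (K+2) = M from by omega]
    refine mul_left_cancel₀ hxne ?_
    push_cast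
    have hxinv : x * x⁻¹ = 1 := mul_inv_cancel₀ hxne
    have hA : x * (∑ j ∈ Finset.range (M+2+1),
          (-1:ℝ)^j * ((M+2).choose j : ℝ) * ((K+M+2+K+j).choose (M+2) : ℝ) * x^(K+j))
        = (∑ j ∈ Finset.range (M+1),
            (-1:ℝ)^j * ((M+2).choose (j+2) : ℝ) * ((2*K+M+4+j).choose (M+2) : ℝ) * x^(K+3+j))
          + (-(((M:ℝ)+2) * ((2*K+M+3).choose (M+2) : ℝ) * x^(K+2)))
          + ((2*K+M+2).choose (M+2) : ℝ) * x^(K+1) := by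
      rw [Finset.mul_sum, Finset.sum_range_succ' _ (M+2), Finset.sum_range_succ' _ (M+1)]
      congr 1
      · congr 1
        · refine Finset.sum_congr rfl fun j hj => ?_
          rw [show K+M+2+K+(j+1+1) = 2*K+M+4+j from by omega]
          push_cast; ring
        · rw [show K+M+2+K+(0+1) = 2*K+M+3 from by omega,
              show (0:ℕ)+1 = 1 from rfl, Nat.choose_one_right]
          push_cast; ring
      · rw [show K+M+2+K+0 = 2*K+M+2 from by omega]
        norm_num
        try ring
    have hB : (∑ j ∈ Finset.range (M+1+1),
          (-1:ℝ)^j * ((M+1).choose j : ℝ) * ((K+M+2+(K+1)+j).choose (M+1) : ℝ) * x^(K+1+j))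
        = (∑ j ∈ Finset.range (M+1),
            (-1:ℝ)^j * ((M+1).choose (j+2) : ℝ) * ((2*K+M+5+j).choose (M+1) : ℝ) * x^(K+3+j))
          + (-(((M:ℝ)+1) * ((2*K+M+4).choose (M+1) : ℝ) * x^(K+2)))
          + ((2*K+M+3).choose (M+1) : ℝ) * x^(K+1) := by
      have hext : (∑ j ∈ Finset.range (M+2+1),
            (-1:ℝ)^j * ((M+1).choose j : ℝ) * ((K+M+2+(K+1)+j).choose (M+1) : ℝ) * x^(K+1+j))
          = ∑ j ∈ Finset.range (M+1+1),
            (-1:ℝ)^j * ((M+1).choose j : ℝ) * ((K+M+2+(K+1)+j).choose (M+1) : ℝ) * x^(K+1+j) := by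
        rw [Finset.sum_range_succ, Nat.choose_eq_zero_of_lt (by omega : M+1 < M+2)]
        norm_num
        try ring
      rw [← hext, Finset.sum_range_succ' _ (M+2), Finset.sum_range_succ' _ (M+1)]
      congr 1
      · congr 1
        · refine Finset.sum_congr rfl fun j hj => ?_
          rw [show K+M+2+(K+1)+(j+1+1) = 2*K+M+5+j from by omega]
          push_cast; ring
        · rw [show K+M+2+(K+1)+(0+1) = 2*K+M+4 from by omega,
              show (0:ℕ)+1 = 1 from rfl, Nat.choose_one_right]
          push_cast; ring
      · rw [show K+M+2+(K+1)+0 = 2*K+M+3 from by omega]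
        norm_num
        try ring
    have hC : x * (∑ j ∈ Finset.range (M+1+1),
          (-1:ℝ)^j * ((M+1).choose j : ℝ) * ((K+M+2+(K+1)+j).choose (M+1) : ℝ) * x^(K+1+j))
        = -(∑ j ∈ Finset.range (M+1),
            (-1:ℝ)^j * ((M+1).choose (j+1) : ℝ) * ((2*K+M+4+j).choose (M+1) : ℝ) * x^(K+3+j))
          + ((2*K+M+3).choose (M+1) : ℝ) * x^(K+2) := by
      rw [Finset.mul_sum, Finset.sum_range_succ' _ (M+1)]
      congr 1
      · rw [← Finset.sum_neg_distrib]
        refine Finset.sum_congr rfl fun j hj => ?_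
        rw [show K+M+2+(K+1)+(j+1) = 2*K+M+4+j from by omega]
        push_cast; ring
      · rw [show K+M+2+(K+1)+0 = 2*K+M+3 from by omega]
        norm_num
        try ring
    have hD : x * (∑ j ∈ Finset.range (M+1),
          (-1:ℝ)^j * (M.choose j : ℝ) * ((K+M+2+(K+1+1)+j).choose M : ℝ) * x^(K+1+1+j))
        = ∑ j ∈ Finset.range (M+1),
          (-1:ℝ)^j * (M.choose j : ℝ) * ((2*K+M+4+j).choose M : ℝ) * x^(K+3+j) := by
      rw [Finset.mul_sum]
      refine Finset.sum_congr rfl fun j hj => ?_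
      rw [show K+M+2+(K+1+1)+j = 2*K+M+4+j from by omega]
      ring
    have hsum : (2*(K:ℝ)+3)*(2*(K:ℝ)+(M:ℝ)+3)*((M:ℝ)+2) *
          (∑ j ∈ Finset.range (M+1),
            (-1:ℝ)^j * ((M+2).choose (j+2) : ℝ) * ((2*K+M+4+j).choose (M+2) : ℝ) * x^(K+3+j))
        = 2*((K:ℝ)+1)*(2*(K:ℝ)+1)*(2*(K:ℝ)+3) *
            (∑ j ∈ Finset.range (M+1),
              (-1:ℝ)^j * ((M+1).choose (j+2) : ℝ) * ((2*K+M+5+j).choose (M+1) : ℝ) * x^(K+3+j))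
          + 4*((K:ℝ)+1)*(((K:ℝ)+(M:ℝ)+2)^2+((K:ℝ)+1)^2+((K:ℝ)+(M:ℝ)+2)) *
            (∑ j ∈ Finset.range (M+1),
              (-1:ℝ)^j * ((M+1).choose (j+1) : ℝ) * ((2*K+M+4+j).choose (M+1) : ℝ) * x^(K+3+j))
          - (2*(K:ℝ)+1)*((M:ℝ)+1)*(2*(K:ℝ)+(M:ℝ)+4) *
            (∑ j ∈ Finset.range (M+1),
              (-1:ℝ)^j * (M.choose j : ℝ) * ((2*K+M+4+j).choose M : ℝ) * x^(K+3+j)) := by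
      rw [Finset.mul_sum, Finset.mul_sum, Finset.mul_sum, Finset.mul_sum,
          ← Finset.sum_add_distrib, ← Finset.sum_sub_distrib]
      refine Finset.sum_congr rfl fun j hj => ?_
      obtain ⟨r, rfl⟩ : ∃ r, M = j + r := ⟨M - j, by simp at hj; omega⟩
      rw [show 2*K+(j+r)+4+j = 2*K+2*j+r+4 from by omega,
          show 2*K+(j+r)+5+j = 2*K+2*j+r+5 from by omega]
      push_cast
      linear_combination ((-1:ℝ)^j * x^(K+3+j)) * key_s15 K r j
    have hkey1 : (2*(K:ℝ)+3)*(2*(K:ℝ)+(M:ℝ)+3)*((M:ℝ)+2) *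
          (-(((M:ℝ)+2) * ((2*K+M+3).choose (M+2) : ℝ) * x^(K+2)))
        = 2*((K:ℝ)+1)*(2*(K:ℝ)+1)*(2*(K:ℝ)+3) *
            (-(((M:ℝ)+1) * ((2*K+M+4).choose (M+1) : ℝ) * x^(K+2)))
          - 4*((K:ℝ)+1)*(((K:ℝ)+(M:ℝ)+2)^2+((K:ℝ)+1)^2+((K:ℝ)+(M:ℝ)+2)) *
            (((2*K+M+3).choose (M+1) : ℝ) * x^(K+2)) := by
      linear_combination (-(x^(K+2))) * key1 K M
    have hkey0 : (2*(K:ℝ)+3)*(2*(K:ℝ)+(M:ℝ)+3)*((M:ℝ)+2) *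
          (((2*K+M+2).choose (M+2) : ℝ) * x^(K+1))
        = 2*((K:ℝ)+1)*(2*(K:ℝ)+1)*(2*(K:ℝ)+3) *
            (((2*K+M+3).choose (M+1) : ℝ) * x^(K+1)) := by
      linear_combination (x^(K+1)) * key0 K M
    linear_combination ((2*(K:ℝ)+3)*(2*(K:ℝ)+(M:ℝ)+3)*((M:ℝ)+2)) * hA
      - (2*((K:ℝ)+1)*(2*(K:ℝ)+1)*(2*(K:ℝ)+3) * (∑ j ∈ Finset.range (M+1+1),
          (-1:ℝ)^j * ((M+1).choose j : ℝ) * ((K+M+2+(K+1)+j).choose (M+1) : ℝ) * x^(K+1+j))) * hxinv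
      - (2*((K:ℝ)+1)*(2*(K:ℝ)+1)*(2*(K:ℝ)+3)) * hB
      + (4*((K:ℝ)+1)*(((K:ℝ)+(M:ℝ)+2)^2+((K:ℝ)+1)^2+((K:ℝ)+(M:ℝ)+2))) * hC
      + ((2*(K:ℝ)+1)*((M:ℝ)+1)*(2*(K:ℝ)+(M:ℝ)+4)) * hD
      + hsum + hkey1 + hkey0
  · simp [aKind]
  · rw [show K+M+2-1 = K+M+1 from by omega]
    simp only [aKind]
    rw [show K+M+2-(K+M+1) = 1 from by omega]
    rw [Finset.sum_range_succ, Finset.sum_range_one]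
    simp [Nat.choose_one_right]
    push_cast
    ring
end

section
/- For integers 0 ≤ k ≤ n, y(x) = A_{nk}(x) solves the differential equation x²(1-x) y'' + x(1-2x) y' - [k² - n(n+1)x] y = 0 on (0,1). -/
open Real MeasureTheory

/-- coefficient of the A-kind polynomial -/
noncomputable def cc_s16 (n k j : ℕ) : ℝ :=
  (-1 : ℝ) ^ j * ((n - k).choose j : ℝ) * ((n + k + j).choose (n - k) : ℝ)

private lemma deriv_sum_pow (c : ℕ → ℝ) (e : ℕ → ℕ) (N : ℕ) :
    deriv (fun x : ℝ => ∑ j ∈ Finset.range N, c j * x ^ (e j)) =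
      fun x => ∑ j ∈ Finset.range N, c j * ((e j : ℕ) : ℝ) * x ^ (e j - 1) := by
  funext x
  rw [deriv_fun_sum (fun i _ => (differentiableAt_pow (e i)).const_mul _)]
  refine Finset.sum_congr rfl fun j _ => ?_
  rw [deriv_const_mul _ (differentiableAt_pow _), deriv_pow_field]
  ring

private lemma natB (N m : ℕ) (hm : m ≤ N) :
    (N + 1).choose m * (N + 1 - m) = N.choose m * (N + 1) := by
  have h1 : (N + 1).choose m = (N + 1).choose (N + 1 - m) :=
    (Nat.choose_symm (Nat.le_succ_of_le hm)).symm
  have h2 : N + 1 - m = (N - m) + 1 := by omega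
  rw [h1, h2]
  have h3 := (Nat.add_one_mul_choose_eq N (N - m)).symm
  have h4 : N.choose (N - m) = N.choose m := Nat.choose_symm hm
  calc (N + 1).choose ((N - m) + 1) * ((N - m) + 1)
      = (N + 1) * N.choose (N - m) := h3
    _ = N.choose m * (N + 1) := by rw [h4, Nat.mul_comm]

private lemma term_eq (c kk nn x : ℝ) (p : ℕ) :
    x ^ 2 * (1 - x) * (c * (p : ℝ) * ((p - 1 : ℕ) : ℝ) * x ^ (p - 1 - 1)) +
      x * (1 - 2 * x) * (c * (p : ℝ) * x ^ (p - 1)) -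
      (kk - nn * x) * (c * x ^ p)
    = c * x ^ p *
        (((p : ℝ) * ((p - 1 : ℕ) : ℝ) + (p : ℝ) - kk) -
          ((p : ℝ) * ((p - 1 : ℕ) : ℝ) + 2 * (p : ℝ) - nn) * x) := by
  match p with
  | 0 => push_cast; ring
  | 1 => push_cast; ring
  | (q + 2) =>
    have : q + 2 - 1 - 1 = q := by omega
    rw [this]
    have : q + 2 - 1 = q + 1 := by omega
    rw [this]
    push_cast; ring

private lemma key_s16 (n k j : ℕ) (hk : k ≤ n) (hj : j < n - k) :
    cc_s16 n k (j + 1) *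
        (((k + j + 1 : ℕ) : ℝ) * ((k + j + 1 - 1 : ℕ) : ℝ) + ((k + j + 1 : ℕ) : ℝ) - (k : ℝ) ^ 2)
      = cc_s16 n k j *
        (((k + j : ℕ) : ℝ) * ((k + j - 1 : ℕ) : ℝ) + 2 * ((k + j : ℕ) : ℝ) -
          (n : ℝ) * ((n : ℝ) + 1)) := by
  -- brackets
  have hL : (((k + j + 1 : ℕ) : ℝ) * ((k + j + 1 - 1 : ℕ) : ℝ) + ((k + j + 1 : ℕ) : ℝ) - (k : ℝ) ^ 2)
      = ((j + 1 : ℕ) : ℝ) * ((2 * k + j + 1 : ℕ) : ℝ) := by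
    have : k + j + 1 - 1 = k + j := by omega
    rw [this]; push_cast; ring
  have hR : (((k + j : ℕ) : ℝ) * ((k + j - 1 : ℕ) : ℝ) + 2 * ((k + j : ℕ) : ℝ) -
        (n : ℝ) * ((n : ℝ) + 1))
      = -(((n - k - j : ℕ) : ℝ) * ((n + k + j + 1 : ℕ) : ℝ)) := by
    have hsub : ((n - k - j : ℕ) : ℝ) = (n : ℝ) - (k : ℝ) - (j : ℝ) := by
      rw [Nat.cast_sub (by omega : j ≤ n - k), Nat.cast_sub (by omega : k ≤ n)]
    rcases Nat.eq_zero_or_pos (k + j) with h0 | h1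
    · have hk0 : k = 0 := by omega
      have hj0 : j = 0 := by omega
      subst hk0; subst hj0
      simp only [Nat.zero_add, Nat.add_zero, Nat.zero_sub, Nat.sub_zero, Nat.cast_zero] at hsub ⊢
      rw [hsub]
      push_cast
      ring
    · have : ((k + j - 1 : ℕ) : ℝ) = (k : ℝ) + j - 1 := by
        push_cast [Nat.cast_sub (by omega : 1 ≤ k + j)]; ring
      rw [this, hsub]; push_cast; ring
  rw [hL, hR]
  -- nat identity
  have hnat : (n - k).choose (j + 1) * (j + 1) * ((n + k + (j + 1)).choose (n - k) * (2 * k + j + 1))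
      = (n - k).choose j * ((n - k) - j) * ((n + k + j).choose (n - k) * (n + k + j + 1)) := by
    have hA := Nat.choose_succ_right_eq (n - k) j
    have h2 : 2 * k + j + 1 = (n + k + j + 1) - (n - k) := by omega
    have h3 : n + k + (j + 1) = (n + k + j) + 1 := by omega
    rw [hA, h2, h3, natB (n + k + j) (n - k) (by omega)]
  have hmj : ((n - k) - j : ℕ) = (n - k - j : ℕ) := by omega
  have hcast := congrArg (fun t : ℕ => (t : ℝ)) hnat
  simp only [hmj, Nat.cast_mul] at hcast
  unfold cc_s16
  rw [pow_succ]
  push_cast at hcast ⊢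
  linear_combination (-(-1 : ℝ) ^ j) * hcast

private lemma P0 (n k : ℕ) :
    ((k + 0 : ℕ) : ℝ) * ((k + 0 - 1 : ℕ) : ℝ) + ((k + 0 : ℕ) : ℝ) - (k : ℝ) ^ 2 = 0 := by
  rcases k with _ | q
  · simp
  · simp only [Nat.add_zero, Nat.succ_sub_one]
    push_cast; ring

private lemma Qm (n k : ℕ) (hk : k ≤ n) :
    ((k + (n - k) : ℕ) : ℝ) * ((k + (n - k) - 1 : ℕ) : ℝ) + 2 * ((k + (n - k) : ℕ) : ℝ) -
      (n : ℝ) * ((n : ℝ) + 1) = 0 := by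
  have h1 : k + (n - k) = n := by omega
  rw [h1]
  rcases n with _ | q
  · simp
  · simp only [Nat.succ_sub_one]
    push_cast; ring

theorem stmt_16 (n k : ℕ) (hk : k ≤ n) (x : ℝ) (hx : x ∈ Set.Ioo (0 : ℝ) 1) :
    x ^ 2 * (1 - x) * iteratedDeriv 2 (aKind n k) x +
      x * (1 - 2 * x) * deriv (aKind n k) x -
      ((k : ℝ) ^ 2 - n * (n + 1) * x) * aKind n k x = 0 := by
  have hf : aKind n k = fun x : ℝ => ∑ j ∈ Finset.range (n - k + 1), cc_s16 n k j * x ^ (k + j) := by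
    funext y; rfl
  have h1 : deriv (aKind n k) =
      fun x : ℝ => ∑ j ∈ Finset.range (n - k + 1),
        cc_s16 n k j * ((k + j : ℕ) : ℝ) * x ^ (k + j - 1) := by
    rw [hf, deriv_sum_pow (fun j => cc_s16 n k j) (fun j => k + j) (n - k + 1)]
  have h2 : deriv (deriv (aKind n k)) =
      fun x : ℝ => ∑ j ∈ Finset.range (n - k + 1),
        cc_s16 n k j * ((k + j : ℕ) : ℝ) * ((k + j - 1 : ℕ) : ℝ) * x ^ (k + j - 1 - 1) := by
    rw [h1, deriv_sum_pow (fun j => cc_s16 n k j * ((k + j : ℕ) : ℝ)) (fun j => k + j - 1) (n - k + 1)]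
  have hiter : iteratedDeriv 2 (aKind n k) = deriv (deriv (aKind n k)) := by
    rw [show (2 : ℕ) = 1 + 1 from rfl, iteratedDeriv_succ, iteratedDeriv_one]
  rw [hiter, h2, h1, hf]
  simp only []
  rw [Finset.mul_sum, Finset.mul_sum, Finset.mul_sum, ← Finset.sum_add_distrib,
    ← Finset.sum_sub_distrib]
  have hterm : ∀ j ∈ Finset.range (n - k + 1),
      x ^ 2 * (1 - x) * (cc_s16 n k j * ((k + j : ℕ) : ℝ) * ((k + j - 1 : ℕ) : ℝ) * x ^ (k + j - 1 - 1)) +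
        x * (1 - 2 * x) * (cc_s16 n k j * ((k + j : ℕ) : ℝ) * x ^ (k + j - 1)) -
        ((k : ℝ) ^ 2 - (n : ℝ) * ((n : ℝ) + 1) * x) * (cc_s16 n k j * x ^ (k + j))
      = cc_s16 n k j * x ^ (k + j) *
          ((((k + j : ℕ) : ℝ) * ((k + j - 1 : ℕ) : ℝ) + ((k + j : ℕ) : ℝ) - (k : ℝ) ^ 2) -
            (((k + j : ℕ) : ℝ) * ((k + j - 1 : ℕ) : ℝ) + 2 * ((k + j : ℕ) : ℝ) -
              (n : ℝ) * ((n : ℝ) + 1)) * x) :=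
    fun j _ => term_eq (cc_s16 n k j) ((k : ℝ) ^ 2) ((n : ℝ) * ((n : ℝ) + 1)) x (k + j)
  rw [Finset.sum_congr rfl hterm]
  have hsplit : ∑ j ∈ Finset.range (n - k + 1),
      cc_s16 n k j * x ^ (k + j) *
        ((((k + j : ℕ) : ℝ) * ((k + j - 1 : ℕ) : ℝ) + ((k + j : ℕ) : ℝ) - (k : ℝ) ^ 2) -
          (((k + j : ℕ) : ℝ) * ((k + j - 1 : ℕ) : ℝ) + 2 * ((k + j : ℕ) : ℝ) -
            (n : ℝ) * ((n : ℝ) + 1)) * x)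
    = (∑ j ∈ Finset.range (n - k + 1),
        cc_s16 n k j * (((k + j : ℕ) : ℝ) * ((k + j - 1 : ℕ) : ℝ) + ((k + j : ℕ) : ℝ) - (k : ℝ) ^ 2) *
          x ^ (k + j)) -
      (∑ j ∈ Finset.range (n - k + 1),
        cc_s16 n k j * (((k + j : ℕ) : ℝ) * ((k + j - 1 : ℕ) : ℝ) + 2 * ((k + j : ℕ) : ℝ) -
          (n : ℝ) * ((n : ℝ) + 1)) * x ^ (k + j + 1)) := by
    rw [← Finset.sum_sub_distrib]
    refine Finset.sum_congr rfl fun j _ => ?_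
    rw [pow_succ]; ring
  rw [hsplit]
  rw [Finset.sum_range_succ' (fun j =>
      cc_s16 n k j * (((k + j : ℕ) : ℝ) * ((k + j - 1 : ℕ) : ℝ) + ((k + j : ℕ) : ℝ) - (k : ℝ) ^ 2) *
        x ^ (k + j)) (n - k),
    Finset.sum_range_succ]
  rw [P0 n k, Qm n k hk]
  simp only [mul_zero, zero_mul, add_zero, sub_zero]
  rw [← Finset.sum_sub_distrib]
  refine Finset.sum_eq_zero fun j hj => ?_
  have hjlt : j < n - k := Finset.mem_range.mp hj
  have hkey := key_s16 n k j hk hjlt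
  have hadd : k + (j + 1) = k + j + 1 := rfl
  rw [hadd, hkey]
  ring
end
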